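/- arXiv:1804.03057 — 2 statements merged into one kernel-verified Lean document; each statement's English description precedes it below -/
import Mathlib

section
/- Let C = ℝ × (ℝ/2πℤ) be the infinite cylinder and let R : C → C be the half-rotation R(x, θ) = (x, θ + π). Let Z ⊆ C be a nonempty compact set that separates the bottom of the cylinder from the top, in the sense that every continuous path γ : [0,1] → C whose starting point has first coordinate strictly less than the first coordinate of every point of Z and whose endpoint has first coordinate strictly greater than the first coordinate of every point of Z must meet Z. Then Z ∩ R(Z) ≠ ∅. -/
open Set Real

noncomputable section

/-- The infinite cylinder `C = ℝ × (ℝ/2πℤ)`. -/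
abbrev Cylinder := ℝ × AddCircle (2 * π)

/-- The half-rotation `R(x, θ) = (x, θ + π)` of the cylinder. -/
def halfRotation (q : Cylinder) : Cylinder := (q.1, q.2 + ((π : ℝ) : AddCircle (2 * π)))

namespace Stmt2

open scoped Classical

variable {n R : ℕ}

abbrev VV (n R : ℕ) := ZMod n × ZMod R

/-- legal (non-wrapping) vertical adjacency between face-rows -/
def legalRows {R : ℕ} (a b : ZMod R) : Prop :=
  b = a ∨ (b = a + 1 ∧ b ≠ 0) ∨ (a = b + 1 ∧ a ≠ 0)

section Core

variable (Y : VV n R → Prop) (Φ : VV n R → ZMod 2)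

def stepRel (f g : VV n R) : Prop :=
  ¬ Y f ∧ ¬ Y g ∧ (g.1 = f.1 ∨ g.1 = f.1 + 1 ∨ f.1 = g.1 + 1) ∧ legalRows f.2 g.2

def Tset (f : VV n R) : Prop :=
  ¬ Y f ∧ ∃ s : VV n R, s.2 = 0 ∧ Relation.ReflTransGen (stepRel Y) s f

noncomputable def chiT (k : ZMod n) (j : ZMod R) : ZMod 2 := if Tset Y (k, j) then 1 else 0

noncomputable def Ht (k : ZMod n) (j : ZMod R) : ZMod 2 := chiT Y k j + chiT Y k (j - 1)

noncomputable def Vt (k : ZMod n) (j : ZMod R) : ZMod 2 := chiT Y k j + chiT Y (k - 1) j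

def faceAt (k : ZMod n) (j : ZMod R) (y : VV n R) : Prop :=
  (y.1 = k ∨ y.1 = k - 1) ∧ (y.2 = j ∨ y.2 = j - 1)

noncomputable def psiV (k : ZMod n) (y : VV n R) : ZMod 2 :=
  Φ y + (if k = 0 ∧ y.1 = -1 then 1 else 0)

noncomputable def phiV (k : ZMod n) (j : ZMod R) : ZMod 2 :=
  if h : ∃ y : VV n R, faceAt k j y ∧ Y y then psiV Φ k h.choose else 0

lemma zmod2_cases (x : ZMod 2) : x = 0 ∨ x = 1 := by revert x; decide

lemma zmod2_add_self (x : ZMod 2) : x + x = 0 := by revert x; decide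

lemma zmod2_mul_two (x : ZMod 2) : x * 2 = 0 := by revert x; decide

lemma zero_ne_neg_one (h : 3 ≤ n) : (0 : ZMod n) ≠ -1 := by
  haveI : NeZero n := ⟨by omega⟩
  intro hh
  have h1 : (1 : ZMod n) = 0 := by linear_combination hh
  have h2 : ((1 : ℕ) : ZMod n) = 0 := by exact_mod_cast h1
  rw [ZMod.natCast_eq_zero_iff] at h2
  have := Nat.le_of_dvd one_pos h2
  omega

lemma rows_legal {j y2 y2' : ZMod R} (hj : j ≠ 0)
    (h : y2 = j ∨ y2 = j - 1) (h' : y2' = j ∨ y2' = j - 1) : legalRows y2 y2' := by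
  rcases h with h | h <;> rcases h' with h' | h'
  · left; rw [h, h']
  · right; right; constructor
    · rw [h, h']; ring
    · rw [h]; exact hj
  · right; left; constructor
    · rw [h, h']; ring
    · rw [h']; exact hj
  · left; rw [h, h']

lemma psi_eq (hn3 : 3 ≤ n)
    (HS : ∀ y y' : VV n R, Y y → Y y' → legalRows y.2 y'.2 → y'.1 = y.1 → Φ y' = Φ y)
    (HT : ∀ y y' : VV n R, Y y → Y y' → legalRows y.2 y'.2 → y'.1 = y.1 + 1 →
      Φ y' = Φ y + (if y'.1 = 0 then 1 else 0))
    {k : ZMod n} {j : ZMod R} {y y' : VV n R} (hj : j ≠ 0)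
    (hy : faceAt k j y) (hYy : Y y) (hy' : faceAt k j y') (hYy' : Y y') :
    psiV Φ k y = psiV Φ k y' := by
  obtain ⟨hc, hr⟩ := hy
  obtain ⟨hc', hr'⟩ := hy'
  have hleg : legalRows y.2 y'.2 := rows_legal hj hr hr'
  have hleg' : legalRows y'.2 y.2 := rows_legal hj hr' hr
  have key : ∀ a b : VV n R, Y a → Y b → legalRows a.2 b.2 → a.1 = k - 1 → b.1 = k →
      psiV Φ k a = psiV Φ k b := by
    intro a b hYa hYb hl ha hb
    have hstep : b.1 = a.1 + 1 := by rw [ha, hb]; ring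
    have hPhi : Φ b = Φ a + (if b.1 = 0 then 1 else 0) := HT a b hYa hYb hl hstep
    unfold psiV
    rw [hPhi, ha, hb]
    by_cases hk : k = 0
    · rw [if_pos hk]
      rw [if_pos ⟨hk, by rw [hk]; ring⟩]
      rw [if_neg (by rintro ⟨h1, h2⟩; exact zero_ne_neg_one hn3 (h1 ▸ h2))]
      ring
    · rw [if_neg hk]
      rw [if_neg (by rintro ⟨h1, h2⟩; exact hk h1)]
      rw [if_neg (by rintro ⟨h1, h2⟩; exact hk h1)]
      ring
  rcases hc with hc | hc <;> rcases hc' with hc' | hc'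
  · -- same column k
    have hPhi : Φ y' = Φ y := HS y y' hYy hYy' hleg (by rw [hc, hc'])
    unfold psiV; rw [hPhi, hc, hc']
  · exact (key y' y hYy' hYy hleg' hc' hc).symm
  · exact key y y' hYy hYy' hleg hc hc'
  · have hPhi : Φ y' = Φ y := HS y y' hYy hYy' hleg (by rw [hc, hc'])
    unfold psiV; rw [hPhi, hc, hc']

lemma phi_spec (hn3 : 3 ≤ n)
    (HS : ∀ y y' : VV n R, Y y → Y y' → legalRows y.2 y'.2 → y'.1 = y.1 → Φ y' = Φ y)
    (HT : ∀ y y' : VV n R, Y y → Y y' → legalRows y.2 y'.2 → y'.1 = y.1 + 1 →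
      Φ y' = Φ y + (if y'.1 = 0 then 1 else 0))
    {k : ZMod n} {j : ZMod R} {y : VV n R} (hj : j ≠ 0)
    (hy : faceAt k j y) (hYy : Y y) :
    phiV Y Φ k j = psiV Φ k y := by
  have hex : ∃ y : VV n R, faceAt k j y ∧ Y y := ⟨y, hy, hYy⟩
  unfold phiV
  rw [dif_pos hex]
  exact psi_eq Y Φ hn3 HS HT hj hex.choose_spec.1 hex.choose_spec.2 hy hYy

end Core

section Core2

variable (Y : VV n R → Prop) (Φ : VV n R → ZMod 2)

lemma T_of_row0 (HY0 : ∀ f : VV n R, f.2 = 0 → ¬ Y f) (k : ZMod n) : Tset Y ((k, 0) : VV n R) :=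
  ⟨HY0 (k, 0) rfl, (k, 0), rfl, Relation.ReflTransGen.refl⟩

lemma T_extend {f g : VV n R} (hf : Tset Y f) (hgY : ¬ Y g)
    (hcol : g.1 = f.1 ∨ g.1 = f.1 + 1 ∨ f.1 = g.1 + 1) (hrow : legalRows f.2 g.2) :
    Tset Y g := by
  obtain ⟨hYf, s, hs0, hchain⟩ := hf
  exact ⟨hgY, s, hs0, hchain.tail ⟨hYf, hgY, hcol, hrow⟩⟩

/-- obstacle for a horizontal interface edge -/
lemma Hobs {k : ZMod n} {j : ZMod R} (hj : j ≠ 0) (h : Ht Y k j = 1) :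
    ∃ y : VV n R, Y y ∧ y.1 = k ∧ (y.2 = j ∨ y.2 = j - 1) := by
  unfold Ht chiT at h
  by_cases h1 : Tset Y (k, j) <;> by_cases h2 : Tset Y (k, j - 1)
  · rw [if_pos h1, if_pos h2] at h; exact absurd h (by decide)
  · -- (k,j) ∈ T, (k,j-1) ∉ T : obstacle is (k, j-1)
    refine ⟨(k, j - 1), ?_, rfl, Or.inr rfl⟩
    by_contra hY
    exact h2 (T_extend Y h1 hY (Or.inl rfl)
      (Or.inr (Or.inr ⟨by show j = (j-1) + 1; ring, hj⟩)))
  · refine ⟨(k, j), ?_, rfl, Or.inl rfl⟩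
    by_contra hY
    exact h1 (T_extend Y h2 hY (Or.inl rfl)
      (Or.inr (Or.inl ⟨by show j = (j-1) + 1; ring, hj⟩)))
  · rw [if_neg h1, if_neg h2] at h; exact absurd h (by decide)

/-- obstacle for a vertical interface edge -/
lemma Vobs (HY0 : ∀ f : VV n R, f.2 = 0 → ¬ Y f)
    (Hblock : ∀ f : VV n R, Tset Y f → f.2 ≠ -1)
    {k : ZMod n} {j : ZMod R} (h : Vt Y k j = 1) :
    j ≠ 0 ∧ j ≠ -1 ∧ ∃ y : VV n R, Y y ∧ (y.1 = k ∨ y.1 = k - 1) ∧ y.2 = j := by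
  have hj0 : j ≠ 0 := by
    intro hj; subst hj
    unfold Vt chiT at h
    rw [if_pos (T_of_row0 Y HY0 k), if_pos (T_of_row0 Y HY0 (k-1))] at h
    exact absurd h (by decide)
  have hjm : j ≠ -1 := by
    intro hj; subst hj
    unfold Vt chiT at h
    rw [if_neg (fun hT => Hblock _ hT rfl), if_neg (fun hT => Hblock _ hT rfl)] at h
    exact absurd h (by decide)
  refine ⟨hj0, hjm, ?_⟩
  unfold Vt chiT at h
  by_cases h1 : Tset Y (k, j) <;> by_cases h2 : Tset Y (k - 1, j)
  · rw [if_pos h1, if_pos h2] at h; exact absurd h (by decide)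
  · refine ⟨(k - 1, j), ?_, Or.inr rfl, rfl⟩
    by_contra hY
    exact h2 (T_extend Y h1 hY (Or.inr (Or.inr (by show k = (k-1) + 1; ring))) (Or.inl rfl))
  · refine ⟨(k, j), ?_, Or.inl rfl, rfl⟩
    by_contra hY
    exact h1 (T_extend Y h2 hY (Or.inr (Or.inl (by show k = (k-1) + 1; ring))) (Or.inl rfl))
  · rw [if_neg h1, if_neg h2] at h; exact absurd h (by decide)

lemma claim1 (hn3 : 3 ≤ n)
    (HS : ∀ y y' : VV n R, Y y → Y y' → legalRows y.2 y'.2 → y'.1 = y.1 → Φ y' = Φ y)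
    (HT : ∀ y y' : VV n R, Y y → Y y' → legalRows y.2 y'.2 → y'.1 = y.1 + 1 →
      Φ y' = Φ y + (if y'.1 = 0 then 1 else 0))
    {k : ZMod n} {j : ZMod R} (hj : j ≠ 0) :
    Ht Y k j * (phiV Y Φ k j + phiV Y Φ (k + 1) j) = Ht Y k j * (if k = -1 then 1 else 0) := by
  rcases Stmt2.zmod2_cases (Ht Y k j) with h | h
  · rw [h, zero_mul, zero_mul]
  · rw [h, one_mul, one_mul]
    obtain ⟨y, hYy, hyc, hyr⟩ := Hobs Y hj h
    have hface1 : faceAt k j y := ⟨Or.inl hyc, hyr⟩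
    have hface2 : faceAt (k + 1) j y := ⟨Or.inr (by rw [hyc]; ring), hyr⟩
    rw [phi_spec Y Φ hn3 HS HT hj hface1 hYy, phi_spec Y Φ hn3 HS HT hj hface2 hYy]
    unfold psiV
    rw [hyc]
    by_cases hk : k = -1
    · rw [if_pos hk]
      rw [if_neg (by rintro ⟨h1, h2⟩; exact zero_ne_neg_one hn3 (h1 ▸ h2))]
      rw [if_pos ⟨by rw [hk]; ring, hk⟩]
      linear_combination zmod2_mul_two (Φ y)
    · rw [if_neg hk]
      rw [if_neg (by rintro ⟨h1, h2⟩; exact zero_ne_neg_one hn3 (h1 ▸ h2))]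
      rw [if_neg (by rintro ⟨h1, h2⟩; exact hk h2)]
      linear_combination zmod2_mul_two (Φ y)

lemma claim2 (hn3 : 3 ≤ n)
    (HY0 : ∀ f : VV n R, f.2 = 0 → ¬ Y f)
    (Hblock : ∀ f : VV n R, Tset Y f → f.2 ≠ -1)
    (HS : ∀ y y' : VV n R, Y y → Y y' → legalRows y.2 y'.2 → y'.1 = y.1 → Φ y' = Φ y)
    (HT : ∀ y y' : VV n R, Y y → Y y' → legalRows y.2 y'.2 → y'.1 = y.1 + 1 →
      Φ y' = Φ y + (if y'.1 = 0 then 1 else 0))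
    (k : ZMod n) (j : ZMod R) :
    Vt Y k j * (phiV Y Φ k j + phiV Y Φ k (j + 1)) = 0 := by
  rcases Stmt2.zmod2_cases (Vt Y k j) with h | h
  · rw [h, zero_mul]
  · rw [h, one_mul]
    obtain ⟨hj0, hjm, y, hYy, hyc, hyr⟩ := Vobs Y HY0 Hblock h
    have hj1 : j + 1 ≠ 0 := by
      intro hh; exact hjm (by linear_combination hh)
    have hface1 : faceAt k j y := ⟨hyc, Or.inl hyr⟩
    have hface2 : faceAt k (j + 1) y := ⟨hyc, Or.inr (by rw [hyr]; ring)⟩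
    rw [phi_spec Y Φ hn3 HS HT hj0 hface1 hYy, phi_spec Y Φ hn3 HS HT hj1 hface2 hYy]
    exact zmod2_add_self _

end Core2

section CoreMain

variable (Y : VV n R → Prop) (Φ : VV n R → ZMod 2)

lemma sum_shift_sub {M : Type*} [AddCommMonoid M] {m : ℕ} [NeZero m]
    (f : ZMod m → M) (c : ZMod m) : ∑ x : ZMod m, f (x - c) = ∑ x : ZMod m, f x :=
  Fintype.sum_equiv (Equiv.subRight c) _ _ (fun _ => rfl)

lemma sum_shift_add {M : Type*} [AddCommMonoid M] {m : ℕ} [NeZero m]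
    (f : ZMod m → M) (c : ZMod m) : ∑ x : ZMod m, f (x + c) = ∑ x : ZMod m, f x :=
  Fintype.sum_equiv (Equiv.addRight c) _ _ (fun _ => rfl)

theorem core (hn3 : 3 ≤ n) (hR3 : 3 ≤ R)
    (HY0 : ∀ f : VV n R, f.2 = 0 → ¬ Y f)
    (Hblock : ∀ f : VV n R, Tset Y f → f.2 ≠ -1)
    (HS : ∀ y y' : VV n R, Y y → Y y' → legalRows y.2 y'.2 → y'.1 = y.1 → Φ y' = Φ y)
    (HT : ∀ y y' : VV n R, Y y → Y y' → legalRows y.2 y'.2 → y'.1 = y.1 + 1 →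
      Φ y' = Φ y + (if y'.1 = 0 then 1 else 0)) : False := by
  haveI : NeZero n := ⟨by omega⟩
  haveI : NeZero R := ⟨by omega⟩
  set φ := phiV Y Φ with hφ
  -- basic values of χ on the two virtual rows
  have hrow0 : ∀ k : ZMod n, chiT Y k 0 = 1 := fun k => if_pos (T_of_row0 Y HY0 k)
  have hrowm : ∀ k : ZMod n, chiT Y k (-1) = 0 := fun k => if_neg (fun hT => Hblock _ hT rfl)
  have hHt0 : ∀ k : ZMod n, Ht Y k 0 = 1 := by
    intro k
    unfold Ht
    rw [zero_sub, hrow0, hrowm, add_zero]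
  -- the bracket at each vertex vanishes
  have bracket : ∀ (k : ZMod n) (j : ZMod R),
      Ht Y k j + Ht Y (k-1) j + Vt Y k j + Vt Y k (j-1) = 0 := by
    intro k j
    unfold Ht Vt
    linear_combination zmod2_add_self (chiT Y k j) + zmod2_add_self (chiT Y k (j-1)) +
      zmod2_add_self (chiT Y (k-1) j) + zmod2_add_self (chiT Y (k-1) (j-1))
  -- the grand handshake identity
  have hzero : (∑ k : ZMod n, ∑ j : ZMod R,
      (Ht Y k j * (φ k j + φ (k+1) j) + Vt Y k j * (φ k j + φ k (j+1)))) = 0 := by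
    have expand : (∑ k : ZMod n, ∑ j : ZMod R,
        (Ht Y k j * (φ k j + φ (k+1) j) + Vt Y k j * (φ k j + φ k (j+1))))
        = (∑ k : ZMod n, ∑ j : ZMod R, Ht Y k j * φ k j)
          + (∑ k : ZMod n, ∑ j : ZMod R, Ht Y k j * φ (k+1) j)
          + ((∑ k : ZMod n, ∑ j : ZMod R, Vt Y k j * φ k j)
          + (∑ k : ZMod n, ∑ j : ZMod R, Vt Y k j * φ k (j+1))) := by
      simp only [mul_add, Finset.sum_add_distrib]
    have shift2 : (∑ k : ZMod n, ∑ j : ZMod R, Ht Y k j * φ (k+1) j)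
        = ∑ k : ZMod n, ∑ j : ZMod R, Ht Y (k-1) j * φ k j := by
      rw [← sum_shift_sub (fun k => ∑ j : ZMod R, Ht Y k j * φ (k+1) j) 1]
      refine Finset.sum_congr rfl (fun k _ => ?_)
      refine Finset.sum_congr rfl (fun j _ => ?_)
      rw [sub_add_cancel]
    have shift4 : (∑ k : ZMod n, ∑ j : ZMod R, Vt Y k j * φ k (j+1))
        = ∑ k : ZMod n, ∑ j : ZMod R, Vt Y k (j-1) * φ k j := by
      refine Finset.sum_congr rfl (fun k _ => ?_)
      rw [← sum_shift_sub (fun j => Vt Y k j * φ k (j+1)) 1]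
      refine Finset.sum_congr rfl (fun j _ => ?_)
      rw [sub_add_cancel]
    have recombine : (∑ k : ZMod n, ∑ j : ZMod R, Ht Y k j * φ k j)
          + (∑ k : ZMod n, ∑ j : ZMod R, Ht Y (k-1) j * φ k j)
          + ((∑ k : ZMod n, ∑ j : ZMod R, Vt Y k j * φ k j)
          + (∑ k : ZMod n, ∑ j : ZMod R, Vt Y k (j-1) * φ k j))
        = ∑ k : ZMod n, ∑ j : ZMod R,
            ((Ht Y k j + Ht Y (k-1) j + Vt Y k j + Vt Y k (j-1)) * φ k j) := by
      simp only [add_mul, Finset.sum_add_distrib]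
      ring
    rw [expand, shift2, shift4, recombine]
    refine Finset.sum_eq_zero (fun k _ => Finset.sum_eq_zero (fun j _ => ?_))
    rw [bracket k j, zero_mul]
  -- the vertical part vanishes termwise
  have hV : (∑ k : ZMod n, ∑ j : ZMod R, Vt Y k j * (φ k j + φ k (j+1))) = 0 :=
    Finset.sum_eq_zero (fun k _ => Finset.sum_eq_zero
      (fun j _ => claim2 Y Φ hn3 HY0 Hblock HS HT k j))
  have hH : (∑ k : ZMod n, ∑ j : ZMod R, Ht Y k j * (φ k j + φ (k+1) j)) = 0 := by
    have e : (∑ k : ZMod n, ∑ j : ZMod R,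
        (Ht Y k j * (φ k j + φ (k+1) j) + Vt Y k j * (φ k j + φ k (j+1))))
        = (∑ k : ZMod n, ∑ j : ZMod R, Ht Y k j * (φ k j + φ (k+1) j))
          + (∑ k : ZMod n, ∑ j : ZMod R, Vt Y k j * (φ k j + φ k (j+1))) := by
      simp only [Finset.sum_add_distrib]
    rw [e, hV, add_zero] at hzero
    exact hzero
  -- split off the seam row (j = 0)
  have hsplitrow : ∀ k : ZMod n, (∑ j : ZMod R, Ht Y k j * (φ k j + φ (k+1) j))
      = Ht Y k 0 * (φ k 0 + φ (k+1) 0)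
        + ∑ j ∈ Finset.univ.erase (0 : ZMod R), Ht Y k j * (φ k j + φ (k+1) j) := by
    intro k
    exact (Finset.add_sum_erase _ _ (Finset.mem_univ 0)).symm
  have hseam : (∑ k : ZMod n, Ht Y k 0 * (φ k 0 + φ (k+1) 0)) = 0 := by
    have : (∑ k : ZMod n, Ht Y k 0 * (φ k 0 + φ (k+1) 0))
        = (∑ k : ZMod n, φ k 0) + (∑ k : ZMod n, φ (k+1) 0) := by
      simp only [hHt0, one_mul, Finset.sum_add_distrib]
    rw [this, sum_shift_add (fun k => φ k 0) 1]
    exact zmod2_add_self _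
  have hinner : ∀ k : ZMod n,
      (∑ j ∈ Finset.univ.erase (0 : ZMod R), Ht Y k j * (φ k j + φ (k+1) j))
      = (if k = -1 then (∑ j ∈ Finset.univ.erase (0 : ZMod R), Ht Y k j) else 0) := by
    intro k
    have e1 : ∀ j ∈ Finset.univ.erase (0 : ZMod R),
        Ht Y k j * (φ k j + φ (k+1) j) = if k = -1 then Ht Y k j else 0 := by
      intro j hj
      have hj0 : j ≠ 0 := Finset.ne_of_mem_erase hj
      rw [claim1 Y Φ hn3 HS HT hj0]
      by_cases hk : k = -1
      · rw [if_pos hk, if_pos hk, mul_one]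
      · rw [if_neg hk, if_neg hk, mul_zero]
    rw [Finset.sum_congr rfl e1]
    by_cases hk : k = -1
    · simp only [if_pos hk]
    · simp only [if_neg hk, Finset.sum_const_zero]
  have houter : (∑ k : ZMod n,
      (if k = -1 then (∑ j ∈ Finset.univ.erase (0 : ZMod R), Ht Y k j) else 0))
      = ∑ j ∈ Finset.univ.erase (0 : ZMod R), Ht Y (-1) j := by
    rw [Finset.sum_ite_eq' Finset.univ (-1 : ZMod n)
      (fun k => ∑ j ∈ Finset.univ.erase (0 : ZMod R), Ht Y k j)]
    rw [if_pos (Finset.mem_univ _)]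
  have hlast : (∑ j ∈ Finset.univ.erase (0 : ZMod R), Ht Y (-1) j) = 1 := by
    have htot : (∑ j : ZMod R, Ht Y (-1) j) = 0 := by
      have : (∑ j : ZMod R, Ht Y (-1) j)
          = (∑ j : ZMod R, chiT Y (-1) j) + (∑ j : ZMod R, chiT Y (-1) (j - 1)) := by
        unfold Ht
        simp only [Finset.sum_add_distrib]
      rw [this, sum_shift_sub (fun j => chiT Y (-1) j) 1]
      exact zmod2_add_self _
    have hsp : Ht Y (-1) 0 + (∑ j ∈ Finset.univ.erase (0 : ZMod R), Ht Y (-1) j)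
        = ∑ j : ZMod R, Ht Y (-1) j := Finset.add_sum_erase _ _ (Finset.mem_univ 0)
    rw [htot, hHt0] at hsp
    have := zmod2_cases (∑ j ∈ Finset.univ.erase (0 : ZMod R), Ht Y (-1) j)
    rcases this with h | h
    · rw [h, add_zero] at hsp; exact absurd hsp (by decide)
    · exact h
  -- combine everything
  have final : (0 : ZMod 2) = 1 := by
    calc (0 : ZMod 2) = ∑ k : ZMod n, ∑ j : ZMod R, Ht Y k j * (φ k j + φ (k+1) j) := hH.symm
    _ = ∑ k : ZMod n, (Ht Y k 0 * (φ k 0 + φ (k+1) 0)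
          + ∑ j ∈ Finset.univ.erase (0 : ZMod R), Ht Y k j * (φ k j + φ (k+1) j)) :=
        Finset.sum_congr rfl (fun k _ => hsplitrow k)
    _ = (∑ k : ZMod n, Ht Y k 0 * (φ k 0 + φ (k+1) 0))
          + ∑ k : ZMod n, ∑ j ∈ Finset.univ.erase (0 : ZMod R),
            Ht Y k j * (φ k j + φ (k+1) j) := by
        simp only [Finset.sum_add_distrib]
    _ = 0 + ∑ k : ZMod n,
          (if k = -1 then (∑ j ∈ Finset.univ.erase (0 : ZMod R), Ht Y k j) else 0) := by
        rw [hseam]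
        exact congrArg _ (Finset.sum_congr rfl (fun k _ => hinner k))
    _ = ∑ j ∈ Finset.univ.erase (0 : ZMod R), Ht Y (-1) j := by rw [zero_add, houter]
    _ = 1 := hlast
  exact absurd final (by decide)

end CoreMain

end Stmt2


namespace Stmt2App

noncomputable section

abbrev Cyl := ℝ × AddCircle (2 * π)

lemma AC_coe_add (u v : ℝ) : ((u + v : ℝ) : AddCircle (2*π)) = (u : AddCircle (2*π)) + (v : AddCircle (2*π)) := rfl

lemma AC_continuous : Continuous ((↑) : ℝ → AddCircle (2*π)) := AddCircle.continuous_mk' _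

lemma AC_coe_eq_coe {u v : ℝ} (h : (u : AddCircle (2*π)) = v) : ∃ k : ℤ, u - v = k * (2*π) := by
  have h0 : ((u - v : ℝ) : AddCircle (2*π)) = 0 := by
    rw [sub_eq_add_neg, AC_coe_add, h]
    simp [AC_coe_add]
  rw [AddCircle.coe_eq_zero_iff] at h0
  obtain ⟨k, hk⟩ := h0
  exact ⟨k, by rw [← hk]; push_cast [zsmul_eq_mul]; ring⟩

lemma AC_coe_period (u : ℝ) (k : ℤ) : ((u + k * (2*π) : ℝ) : AddCircle (2*π)) = u := by
  rw [AC_coe_add]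
  have : ((k * (2*π) : ℝ) : AddCircle (2*π)) = 0 := by
    rw [AddCircle.coe_eq_zero_iff]
    exact ⟨k, by push_cast [zsmul_eq_mul]; ring⟩
  rw [this, add_zero]

lemma AC_eq_of_close {u v : ℝ} (h : (u : AddCircle (2*π)) = v) (hc : |u - v| < 2*π) : u = v := by
  obtain ⟨k, hk⟩ := AC_coe_eq_coe h
  rw [hk] at hc
  have hpi : (0:ℝ) < 2*π := by positivity
  rw [abs_mul, abs_of_pos hpi] at hc
  have : |(k:ℝ)| < 1 := by
    by_contra hh
    push_neg at hh
    nlinarith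
  have hk0 : k = 0 := by
    have habs := abs_lt.mp this
    have h1 : (-1 : ℝ) < k := habs.1
    have h2 : (k : ℝ) < 1 := habs.2
    have h1' : (-1 : ℤ) < k := by exact_mod_cast h1
    have h2' : k < (1 : ℤ) := by exact_mod_cast h2
    omega
  rw [hk0] at hk
  push_cast at hk
  linarith [hk]

-- ZMod helpers
lemma zmod_val_add_one {m : ℕ} [NeZero m] (hm : 2 ≤ m) (a : ZMod m) (h : a + 1 ≠ 0) :
    (a + 1).val = a.val + 1 := by
  haveI : Fact (1 < m) := ⟨by omega⟩
  have hv : (a + 1).val = (a.val + 1) % m := by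
    rw [ZMod.val_add, ZMod.val_one]
  have hlt : a.val < m := ZMod.val_lt a
  rcases Nat.lt_or_ge (a.val + 1) m with hh | hh
  · rw [hv, Nat.mod_eq_of_lt hh]
  · have he : a.val + 1 = m := by omega
    exfalso
    apply h
    have ha : a = ((a.val : ℕ) : ZMod m) := by
      rw [ZMod.natCast_val, ZMod.cast_id]
    rw [ha]
    rw [show ((a.val : ℕ) : ZMod m) + 1 = ((a.val + 1 : ℕ) : ZMod m) by push_cast; ring]
    rw [he, ZMod.natCast_self]

lemma zmod_val_neg_one {m : ℕ} (hm : 2 ≤ m) : (-1 : ZMod m).val = m - 1 := by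
  haveI : NeZero m := ⟨by omega⟩
  have h1 : ((m - 1 : ℕ) : ZMod m) = -1 := by
    have : ((m : ℕ) : ZMod m) = 0 := ZMod.natCast_self m
    have hcast : ((m - 1 : ℕ) : ZMod m) = ((m : ℕ) : ZMod m) - 1 := by
      push_cast [Nat.cast_sub (by omega : 1 ≤ m)]
      ring
    rw [hcast, this, zero_sub]
  rw [← h1, ZMod.val_cast_of_lt (by omega)]

end

end Stmt2App

namespace Geo

open Stmt2App

noncomputable section

variable (x₁ x₂ : ℝ) (m : ℕ)

def wA : ℝ := π / m
def dA : ℝ := (x₂ - x₁ + 2) / ((m : ℝ) - 2)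
def yB : ℝ := x₁ - 1

def rowI (j : ZMod m) : Set ℝ :=
  Icc (yB x₁ + ((j.val : ℝ) - 1) * dA x₁ x₂ m) (yB x₁ + (j.val : ℝ) * dA x₁ x₂ m)

def arcI (k : ZMod m) : Set ℝ := Icc ((k.val : ℝ) * wA m) (((k.val : ℝ) + 1) * wA m)

def rowC (j : ZMod m) : ℝ := yB x₁ + (j.val : ℝ) * dA x₁ x₂ m - dA x₁ x₂ m / 2

def arcC (k : ZMod m) : ℝ := (k.val : ℝ) * wA m + wA m / 2

def toCyl (p : ℝ × ℝ) : Cyl := (p.1, (p.2 : AddCircle (2*π)))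

lemma continuous_toCyl : Continuous (toCyl) :=
  continuous_fst.prodMk (AC_continuous.comp continuous_snd)

def cellSet (f : ZMod m × ZMod m) : Set Cyl :=
  {p | p.1 ∈ rowI x₁ x₂ m f.2 ∧ ∃ a ∈ arcI m f.1,
    p.2 = (a : AddCircle (2*π)) ∨ p.2 = ((a + π : ℝ) : AddCircle (2*π))}

variable (hm : 3 ≤ m) (hx : x₁ ≤ x₂)

lemma wA_pos (hm : 3 ≤ m) : 0 < wA m := by
  have : (0:ℝ) < m := by
    have : (3:ℝ) ≤ m := by exact_mod_cast hm
    linarith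
  exact div_pos pi_pos this

lemma dA_pos (hm : 3 ≤ m) (hx : x₁ ≤ x₂) : 0 < dA x₁ x₂ m := by
  apply div_pos (by linarith)
  have : (3:ℝ) ≤ m := by exact_mod_cast hm
  linarith

lemma mw_eq_pi (hm : 3 ≤ m) : (m : ℝ) * wA m = π := by
  have hm0 : (m:ℝ) ≠ 0 := by
    have : (3:ℝ) ≤ m := by exact_mod_cast hm
    linarith
  rw [wA]
  field_simp

lemma center_mem (f : ZMod m × ZMod m) (hm : 3 ≤ m) (hx : x₁ ≤ x₂) :
    toCyl (rowC x₁ x₂ m f.2, arcC m f.1) ∈ cellSet x₁ x₂ m f := by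
  have hd := dA_pos x₁ x₂ m hm hx
  have hw := wA_pos m hm
  constructor
  · constructor
    · show yB x₁ + ((f.2.val:ℝ) - 1) * dA x₁ x₂ m ≤ rowC x₁ x₂ m f.2
      rw [rowC]; ring_nf; nlinarith
    · show rowC x₁ x₂ m f.2 ≤ yB x₁ + (f.2.val:ℝ) * dA x₁ x₂ m
      rw [rowC]; linarith
  · refine ⟨arcC m f.1, ⟨?_, ?_⟩, Or.inl rfl⟩
    · rw [arcC]; linarith
    · rw [arcC]; linarith

def segPath (p q : ℝ × ℝ) : Path (toCyl p) (toCyl q) where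
  toFun t := toCyl ((1 - (t:ℝ)) * p.1 + (t:ℝ) * q.1, (1 - (t:ℝ)) * p.2 + (t:ℝ) * q.2)
  continuous_toFun := by
    apply continuous_toCyl.comp
    apply Continuous.prodMk
    · exact ((continuous_const.sub continuous_subtype_val).mul continuous_const).add
        (continuous_subtype_val.mul continuous_const)
    · exact ((continuous_const.sub continuous_subtype_val).mul continuous_const).add
        (continuous_subtype_val.mul continuous_const)
  source' := by
    show toCyl _ = toCyl (p.1, p.2)
    norm_num
  target' := by
    show toCyl _ = toCyl (q.1, q.2)
    norm_num

lemma mem_cellSet_of (f : ZMod m × ZMod m) (X A : ℝ)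
    (hX : X ∈ rowI x₁ x₂ m f.2) (ha : ∃ a ∈ arcI m f.1,
      ((A : ℝ) : AddCircle (2*π)) = (a : AddCircle (2*π))
        ∨ ((A : ℝ) : AddCircle (2*π)) = ((a + π : ℝ) : AddCircle (2*π))) :
    toCyl (X, A) ∈ cellSet x₁ x₂ m f := by
  obtain ⟨a, ham, hor⟩ := ha
  exact ⟨hX, a, ham, hor⟩

lemma coe_shift_parity (a : ℝ) (kk : ℤ) :
    ((a + kk * π : ℝ) : AddCircle (2*π)) = (a : AddCircle (2*π))
      ∨ ((a + kk * π : ℝ) : AddCircle (2*π)) = ((a + π : ℝ) : AddCircle (2*π)) := by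
  rcases Int.even_or_odd kk with ⟨q, hq⟩ | ⟨q, hq⟩
  · left
    have : a + (kk : ℤ) * π = a + (q : ℤ) * (2*π) := by
      rw [hq]; push_cast; ring
    rw [this, AC_coe_period]
  · right
    have : a + (kk : ℤ) * π = (a + π) + (q : ℤ) * (2*π) := by
      rw [hq]; push_cast; ring
    rw [this, AC_coe_period]

lemma seg_cover (hm : 3 ≤ m) (hx : x₁ ≤ x₂) (b c : ZMod m × ZMod m)
    (α d : ℝ) (kk kk' : ℤ)
    (hα : α = arcC m b.1 + kk * π) (hα' : α + d = arcC m c.1 + kk' * π)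
    (hd : |d| ≤ wA m) (hxx : |rowC x₁ x₂ m c.2 - rowC x₁ x₂ m b.2| ≤ dA x₁ x₂ m)
    (t : unitInterval) :
    segPath (rowC x₁ x₂ m b.2, α) (rowC x₁ x₂ m c.2, α + d) t
      ∈ cellSet x₁ x₂ m b ∪ cellSet x₁ x₂ m c := by
  have hδ := dA_pos x₁ x₂ m hm hx
  have hw := wA_pos m hm
  obtain ⟨s, hs0, hs1⟩ := t
  obtain ⟨hxl, hxr⟩ := abs_le.mp hxx
  obtain ⟨hdl, hdr⟩ := abs_le.mp hd
  show segPath (rowC x₁ x₂ m b.2, α) (rowC x₁ x₂ m c.2, α + d) ⟨s, hs0, hs1⟩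
      ∈ cellSet x₁ x₂ m b ∪ cellSet x₁ x₂ m c
  have happly : segPath (rowC x₁ x₂ m b.2, α) (rowC x₁ x₂ m c.2, α + d) ⟨s, hs0, hs1⟩
      = toCyl ((1 - s) * rowC x₁ x₂ m b.2 + s * rowC x₁ x₂ m c.2,
          (1 - s) * α + s * (α + d)) := rfl
  rw [happly]
  rcases le_or_gt s (1/2) with hhalf | hhalf
  · left
    have hp1 : s * (rowC x₁ x₂ m c.2 - rowC x₁ x₂ m b.2) ≤ dA x₁ x₂ m / 2 := by
      linarith [mul_le_mul_of_nonneg_left hxr hs0,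
        mul_le_mul_of_nonneg_right hhalf hδ.le]
    have hp2 : -(dA x₁ x₂ m / 2) ≤ s * (rowC x₁ x₂ m c.2 - rowC x₁ x₂ m b.2) := by
      linarith [mul_le_mul_of_nonneg_left hxl hs0,
        mul_le_mul_of_nonneg_right hhalf hδ.le]
    have hq1 : s * d ≤ wA m / 2 := by
      linarith [mul_le_mul_of_nonneg_left hdr hs0,
        mul_le_mul_of_nonneg_right hhalf hw.le]
    have hq2 : -(wA m / 2) ≤ s * d := by
      linarith [mul_le_mul_of_nonneg_left hdl hs0,
        mul_le_mul_of_nonneg_right hhalf hw.le]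
    apply mem_cellSet_of
    · have hlo : yB x₁ + ((b.2.val:ℝ) - 1) * dA x₁ x₂ m
          = rowC x₁ x₂ m b.2 - dA x₁ x₂ m / 2 := by rw [rowC]; ring
      have hhi : yB x₁ + (b.2.val:ℝ) * dA x₁ x₂ m
          = rowC x₁ x₂ m b.2 + dA x₁ x₂ m / 2 := by rw [rowC]; ring
      rw [rowI, mem_Icc, hlo, hhi]
      constructor
      · linarith
      · linarith
    · refine ⟨arcC m b.1 + s * d, ?_, ?_⟩
      · have hlo : ((b.1.val:ℝ)) * wA m = arcC m b.1 - wA m / 2 := by rw [arcC]; ring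
        have hhi : ((b.1.val:ℝ) + 1) * wA m = arcC m b.1 + wA m / 2 := by rw [arcC]; ring
        rw [arcI, mem_Icc, hlo, hhi]
        constructor
        · linarith
        · linarith
      · have hval : (1 - s) * α + s * (α + d) = (arcC m b.1 + s * d) + kk * π := by
          rw [hα]; ring
        rw [hval]
        exact coe_shift_parity _ _
  · right
    have hu0 : (0:ℝ) ≤ 1 - s := by linarith
    have hu1 : 1 - s ≤ 1/2 := by linarith
    have hp1 : (1 - s) * (rowC x₁ x₂ m c.2 - rowC x₁ x₂ m b.2) ≤ dA x₁ x₂ m / 2 := by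
      linarith [mul_le_mul_of_nonneg_left hxr hu0,
        mul_le_mul_of_nonneg_right hu1 hδ.le]
    have hp2 : -(dA x₁ x₂ m / 2) ≤ (1 - s) * (rowC x₁ x₂ m c.2 - rowC x₁ x₂ m b.2) := by
      linarith [mul_le_mul_of_nonneg_left hxl hu0,
        mul_le_mul_of_nonneg_right hu1 hδ.le]
    have hq1 : (1 - s) * d ≤ wA m / 2 := by
      linarith [mul_le_mul_of_nonneg_left hdr hu0,
        mul_le_mul_of_nonneg_right hu1 hw.le]
    have hq2 : -(wA m / 2) ≤ (1 - s) * d := by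
      linarith [mul_le_mul_of_nonneg_left hdl hu0,
        mul_le_mul_of_nonneg_right hu1 hw.le]
    apply mem_cellSet_of
    · have hlo : yB x₁ + ((c.2.val:ℝ) - 1) * dA x₁ x₂ m
          = rowC x₁ x₂ m c.2 - dA x₁ x₂ m / 2 := by rw [rowC]; ring
      have hhi : yB x₁ + (c.2.val:ℝ) * dA x₁ x₂ m
          = rowC x₁ x₂ m c.2 + dA x₁ x₂ m / 2 := by rw [rowC]; ring
      rw [rowI, mem_Icc, hlo, hhi]
      constructor
      · linarith
      · linarith
    · refine ⟨arcC m c.1 - (1 - s) * d, ?_, ?_⟩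
      · have hlo : ((c.1.val:ℝ)) * wA m = arcC m c.1 - wA m / 2 := by rw [arcC]; ring
        have hhi : ((c.1.val:ℝ) + 1) * wA m = arcC m c.1 + wA m / 2 := by rw [arcC]; ring
        rw [arcI, mem_Icc, hlo, hhi]
        constructor
        · linarith
        · linarith
      · have hval : (1 - s) * α + s * (α + d)
            = (arcC m c.1 - (1 - s) * d) + kk' * π := by
          have : α = arcC m c.1 + kk' * π - d := by linarith [hα']
          rw [this]; ring
        rw [hval]
        exact coe_shift_parity _ _

section Build

variable (x₁ x₂ : ℝ) (m : ℕ) (Z : Set Cyl)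

def Ygeo (f : ZMod m × ZMod m) : Prop := ∃ z ∈ Z, z ∈ cellSet x₁ x₂ m f

def FreeSet : Set Cyl :=
  {p | ∃ g : ZMod m × ZMod m, ¬ Ygeo x₁ x₂ m Z g ∧ p ∈ cellSet x₁ x₂ m g}

lemma build (hm : 3 ≤ m) (hx : x₁ ≤ x₂) {s f : ZMod m × ZMod m}
    (hchain : Relation.ReflTransGen (Stmt2.stepRel (Ygeo x₁ x₂ m Z)) s f)
    (hsY : ¬ Ygeo x₁ x₂ m Z s) :
    ∃ α : ℝ, (∃ kk : ℤ, α = arcC m f.1 + kk * π) ∧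
      ∃ γ : Path (toCyl (rowC x₁ x₂ m s.2, arcC m s.1)) (toCyl (rowC x₁ x₂ m f.2, α)),
        range ⇑γ ⊆ FreeSet x₁ x₂ m Z := by
  haveI : NeZero m := ⟨by omega⟩
  have hw := wA_pos m hm
  have hδ := dA_pos x₁ x₂ m hm hx
  induction hchain with
  | refl =>
      refine ⟨arcC m s.1, ⟨0, by push_cast; ring⟩, Path.refl _, ?_⟩
      rw [Path.refl_range]
      intro p hp
      rw [mem_singleton_iff] at hp
      rw [hp]
      exact ⟨s, hsY, center_mem x₁ x₂ m s hm hx⟩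
  | @tail b c hbc hstep ih =>
      obtain ⟨α, ⟨kk, hα⟩, γ, hγ⟩ := ih
      obtain ⟨hYb, hYc, hcol, hrow⟩ := hstep
      have hmcast : (3:ℝ) ≤ (m:ℝ) := by exact_mod_cast hm
      have hdisp : ∃ d : ℝ, |d| ≤ wA m ∧ ∃ kk' : ℤ, α + d = arcC m c.1 + kk' * π := by
        rcases hcol with h | h | h
        · exact ⟨0, by rw [abs_zero]; exact hw.le, kk, by rw [add_zero, hα, h]⟩
        · refine ⟨wA m, by rw [abs_of_nonneg hw.le], ?_⟩
          by_cases hb : b.1 = -1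
          · have hc0 : c.1 = 0 := by rw [h, hb]; ring
            refine ⟨kk + 1, ?_⟩
            rw [hα, hc0, hb, arcC, arcC, ZMod.val_zero, zmod_val_neg_one (by omega)]
            have hcast : ((m - 1 : ℕ) : ℝ) = (m:ℝ) - 1 := by
              rw [Nat.cast_sub (by omega : 1 ≤ m)]; norm_num
            rw [hcast]
            have hmw := mw_eq_pi m hm
            push_cast
            linarith
          · have hval : (c.1).val = (b.1).val + 1 := by
              rw [h]
              refine zmod_val_add_one (by omega) b.1 ?_
              intro hh
              exact hb (by linear_combination hh)
            refine ⟨kk, ?_⟩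
            rw [hα, arcC, arcC, hval]
            push_cast; ring
        · refine ⟨-(wA m), by rw [abs_neg, abs_of_nonneg hw.le], ?_⟩
          by_cases hc : c.1 = -1
          · have hb0 : b.1 = 0 := by rw [h, hc]; ring
            refine ⟨kk - 1, ?_⟩
            rw [hα, hb0, hc, arcC, arcC, ZMod.val_zero, zmod_val_neg_one (by omega)]
            have hcast : ((m - 1 : ℕ) : ℝ) = (m:ℝ) - 1 := by
              rw [Nat.cast_sub (by omega : 1 ≤ m)]; norm_num
            rw [hcast]
            have hmw := mw_eq_pi m hm
            push_cast
            linarith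
          · have hval : (b.1).val = (c.1).val + 1 := by
              rw [h]
              refine zmod_val_add_one (by omega) c.1 ?_
              intro hh
              exact hc (by linear_combination hh)
            refine ⟨kk, ?_⟩
            rw [hα, arcC, arcC, hval]
            push_cast; ring
      obtain ⟨d, hd, kk', hα'⟩ := hdisp
      have hxx : |rowC x₁ x₂ m c.2 - rowC x₁ x₂ m b.2| ≤ dA x₁ x₂ m := by
        rcases hrow with h | ⟨h, h0⟩ | ⟨h, h0⟩
        · rw [h, sub_self, abs_zero]; exact hδ.le
        · have hval : (c.2).val = (b.2).val + 1 := by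
            rw [h]
            exact zmod_val_add_one (by omega) b.2 (by rw [← h]; exact h0)
          have : rowC x₁ x₂ m c.2 - rowC x₁ x₂ m b.2 = dA x₁ x₂ m := by
            rw [rowC, rowC, hval]; push_cast; ring
          rw [this, abs_of_nonneg hδ.le]
        · have hval : (b.2).val = (c.2).val + 1 := by
            rw [h]
            exact zmod_val_add_one (by omega) c.2 (by rw [← h]; exact h0)
          have : rowC x₁ x₂ m c.2 - rowC x₁ x₂ m b.2 = -(dA x₁ x₂ m) := by
            rw [rowC, rowC, hval]; push_cast; ring
          rw [this, abs_neg, abs_of_nonneg hδ.le]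
      refine ⟨α + d, ⟨kk', hα'⟩, γ.trans (segPath _ _), ?_⟩
      rw [Path.trans_range]
      refine union_subset hγ ?_
      rintro p ⟨t, rfl⟩
      rcases seg_cover x₁ x₂ m hm hx b c α d kk kk' hα hα' hd hxx t with h | h
      · exact ⟨b, hYb, h⟩
      · exact ⟨c, hYc, h⟩

end Build

section Block

variable (x₁ x₂ : ℝ) (m : ℕ) (Z : Set Cyl)

lemma row0_not_Y (hm : 3 ≤ m) (hZx1 : ∀ z ∈ Z, x₁ ≤ z.1) :
    ∀ f : ZMod m × ZMod m, f.2 = 0 → ¬ Ygeo x₁ x₂ m Z f := by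
  haveI : NeZero m := ⟨by omega⟩
  rintro f hf2 ⟨z, hzZ, hzc, -⟩
  have h1 := hZx1 z hzZ
  rw [hf2] at hzc
  rw [rowI, mem_Icc, ZMod.val_zero] at hzc
  have h2 := hzc.2
  rw [yB] at h2
  push_cast at h2
  linarith

lemma hblock_geo (hm : 3 ≤ m) (hx : x₁ ≤ x₂)
    (hZx1 : ∀ z ∈ Z, x₁ ≤ z.1) (hZx2 : ∀ z ∈ Z, z.1 ≤ x₂)
    (hsep : ∀ γ : ℝ → Cyl, ContinuousOn γ (Icc (0 : ℝ) 1) →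
      (∀ z ∈ Z, (γ 0).1 < z.1) → (∀ z ∈ Z, z.1 < (γ 1).1) →
      ∃ t ∈ Icc (0 : ℝ) 1, γ t ∈ Z) :
    ∀ f : ZMod m × ZMod m, Stmt2.Tset (Ygeo x₁ x₂ m Z) f → f.2 ≠ -1 := by
  haveI : NeZero m := ⟨by omega⟩
  have hδ := dA_pos x₁ x₂ m hm hx
  have hmcast : (3:ℝ) ≤ (m:ℝ) := by exact_mod_cast hm
  rintro f ⟨hYf, s, hs0, hchain⟩ hf2
  have hsY : ¬ Ygeo x₁ x₂ m Z s := row0_not_Y x₁ x₂ m Z hm hZx1 s hs0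
  obtain ⟨α, ⟨kk, hα⟩, γ, hγ⟩ := build x₁ x₂ m Z hm hx hchain hsY
  have hcont : ContinuousOn γ.extend (Icc 0 1) := γ.continuous_extend.continuousOn
  have hdm : ((m:ℝ) - 2) * dA x₁ x₂ m = x₂ - x₁ + 2 := by
    rw [dA, mul_div_cancel₀]
    intro hh
    linarith
  have h0 : ∀ z ∈ Z, (γ.extend 0).1 < z.1 := by
    intro z hz
    rw [Path.extend_zero]
    show rowC x₁ x₂ m s.2 < z.1
    have h1 := hZx1 z hz
    rw [rowC, hs0, ZMod.val_zero, yB]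
    push_cast
    linarith
  have h1 : ∀ z ∈ Z, z.1 < (γ.extend 1).1 := by
    intro z hz
    rw [Path.extend_one]
    show z.1 < rowC x₁ x₂ m f.2
    have h2 := hZx2 z hz
    rw [rowC, hf2, zmod_val_neg_one (by omega), yB]
    have hcast : ((m - 1 : ℕ) : ℝ) = (m:ℝ) - 1 := by
      rw [Nat.cast_sub (by omega : 1 ≤ m)]; norm_num
    rw [hcast]
    nlinarith
  obtain ⟨t, ht, hmem⟩ := hsep γ.extend hcont h0 h1
  have hfree : γ.extend t ∈ FreeSet x₁ x₂ m Z := by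
    rw [Path.extend_apply γ ht]
    exact hγ (mem_range_self _)
  obtain ⟨g, hgY, hgmem⟩ := hfree
  exact hgY ⟨γ.extend t, hmem, hgmem⟩

end Block

section Extract

variable (x₁ x₂ : ℝ) (m : ℕ) (Z : Set Cyl)

open scoped Classical in
noncomputable def Pgeo (f : ZMod m × ZMod m) : Prop :=
  ∃ z ∈ Z, z.1 ∈ rowI x₁ x₂ m f.2 ∧ ∃ a ∈ arcI m f.1, z.2 = (a : AddCircle (2*π))

open scoped Classical in
noncomputable def Phigeo (f : ZMod m × ZMod m) : ZMod 2 :=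
  if Pgeo x₁ x₂ m Z f then 1 else 0

lemma P_elim {f : ZMod m × ZMod m} (hP : Pgeo x₁ x₂ m Z f) :
    ∃ z ∈ Z, z.1 ∈ rowI x₁ x₂ m f.2 ∧ ∃ a ∈ arcI m f.1, z.2 = (a : AddCircle (2*π)) := hP

lemma Y_not_P {f : ZMod m × ZMod m} (hY : Ygeo x₁ x₂ m Z f) (hP : ¬ Pgeo x₁ x₂ m Z f) :
    ∃ z ∈ Z, z.1 ∈ rowI x₁ x₂ m f.2 ∧ ∃ a ∈ arcI m f.1,
      z.2 = ((a + π : ℝ) : AddCircle (2*π)) := by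
  obtain ⟨z, hz, hrow, a, ham, hor⟩ := hY
  rcases hor with h | h
  · exact absurd ⟨z, hz, hrow, a, ham, h⟩ hP
  · exact ⟨z, hz, hrow, a, ham, h⟩

/-- the near-pair predicate -/
def NP (ε : ℝ) : Prop :=
  ∃ z ∈ Z, ∃ z' ∈ Z, |z'.1 - z.1| ≤ ε ∧
    ∃ r : ℝ, |r| ≤ ε ∧ z'.2 = z.2 + ((π + r : ℝ) : AddCircle (2*π))

lemma rows_close (hm : 3 ≤ m) (hx : x₁ ≤ x₂) {j j' : ZMod m}
    (hleg : Stmt2.legalRows j j') {u u' : ℝ}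
    (hu : u ∈ rowI x₁ x₂ m j) (hu' : u' ∈ rowI x₁ x₂ m j') :
    |u' - u| ≤ 2 * dA x₁ x₂ m := by
  haveI : NeZero m := ⟨by omega⟩
  have hδ := dA_pos x₁ x₂ m hm hx
  rw [rowI, mem_Icc] at hu hu'
  rw [abs_le]
  rcases hleg with h | ⟨h, h0⟩ | ⟨h, h0⟩
  · rw [h] at hu'
    constructor <;> linarith [hu.1, hu.2, hu'.1, hu'.2, hδ]
  · have hval : (j').val = j.val + 1 := by
      rw [h]; exact zmod_val_add_one (by omega) j (by rw [← h]; exact h0)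
    rw [hval] at hu'
    push_cast at hu hu'
    constructor <;> linarith [hu.1, hu.2, hu'.1, hu'.2]
  · have hval : (j).val = j'.val + 1 := by
      rw [h]; exact zmod_val_add_one (by omega) j' (by rw [← h]; exact h0)
    rw [hval] at hu
    push_cast at hu hu'
    constructor <;> linarith [hu.1, hu.2, hu'.1, hu'.2]

end Extract

section Scale

variable (x₁ x₂ : ℝ) (m : ℕ) (Z : Set Cyl)

lemma Phi_one_iff (f : ZMod m × ZMod m) :
    Phigeo x₁ x₂ m Z f = 1 ↔ Pgeo x₁ x₂ m Z f := by
  unfold Phigeo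
  split_ifs with h
  · exact iff_of_true rfl h
  · exact iff_of_false (by decide) h

lemma Phi_zero_iff (f : ZMod m × ZMod m) :
    Phigeo x₁ x₂ m Z f = 0 ↔ ¬ Pgeo x₁ x₂ m Z f := by
  unfold Phigeo
  split_ifs with h
  · exact iff_of_false (by decide) (by simp [h])
  · exact iff_of_true rfl h

lemma Phi_eq_of_both {f g : ZMod m × ZMod m}
    (h : Pgeo x₁ x₂ m Z f ↔ Pgeo x₁ x₂ m Z g) :
    Phigeo x₁ x₂ m Z f = Phigeo x₁ x₂ m Z g := by
  unfold Phigeo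
  split_ifs with h1 h2 h2
  · rfl
  · exact absurd (h.mp h1) h2
  · exact absurd (h.mpr h2) h1
  · rfl

lemma scale_NP (hm : 3 ≤ m) (hx : x₁ ≤ x₂)
    (hZx1 : ∀ z ∈ Z, x₁ ≤ z.1) (hZx2 : ∀ z ∈ Z, z.1 ≤ x₂)
    (hsep : ∀ γ : ℝ → Cyl, ContinuousOn γ (Icc (0 : ℝ) 1) →
      (∀ z ∈ Z, (γ 0).1 < z.1) → (∀ z ∈ Z, z.1 < (γ 1).1) →
      ∃ t ∈ Icc (0 : ℝ) 1, γ t ∈ Z) :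
    NP Z (max (2 * dA x₁ x₂ m) (2 * wA m)) := by
  haveI : NeZero m := ⟨by omega⟩
  have hδ := dA_pos x₁ x₂ m hm hx
  have hw := wA_pos m hm
  have hmw := mw_eq_pi m hm
  have hcast : ((m - 1 : ℕ) : ℝ) = (m:ℝ) - 1 := by
    rw [Nat.cast_sub (by omega : 1 ≤ m)]; norm_num
  have mkNP : ∀ z ∈ Z, ∀ z' ∈ Z, |z'.1 - z.1| ≤ 2 * dA x₁ x₂ m →
      ∀ r : ℝ, |r| ≤ 2 * wA m → z'.2 = z.2 + ((π + r : ℝ) : AddCircle (2*π)) →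
      NP Z (max (2 * dA x₁ x₂ m) (2 * wA m)) := by
    intro z hz z' hz' hh r hr he
    exact ⟨z, hz, z', hz', le_trans hh (le_max_left _ _), r,
      le_trans hr (le_max_right _ _), he⟩
  by_cases hHS : ∀ y y' : Stmt2.VV m m, Ygeo x₁ x₂ m Z y → Ygeo x₁ x₂ m Z y' →
      Stmt2.legalRows y.2 y'.2 → y'.1 = y.1 →
      Phigeo x₁ x₂ m Z y' = Phigeo x₁ x₂ m Z y
  · by_cases hHT : ∀ y y' : Stmt2.VV m m, Ygeo x₁ x₂ m Z y → Ygeo x₁ x₂ m Z y' →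
        Stmt2.legalRows y.2 y'.2 → y'.1 = y.1 + 1 →
        Phigeo x₁ x₂ m Z y' = Phigeo x₁ x₂ m Z y + (if y'.1 = 0 then 1 else 0)
    · exact absurd (Stmt2.core (Ygeo x₁ x₂ m Z) (Phigeo x₁ x₂ m Z) hm hm
        (row0_not_Y x₁ x₂ m Z hm hZx1)
        (hblock_geo x₁ x₂ m Z hm hx hZx1 hZx2 hsep) hHS hHT) (fun h => h)
    · push_neg at hHT
      obtain ⟨y, y', hYy, hYy', hleg, hcol, hne⟩ := hHT
      by_cases h0 : y'.1 = 0
      · -- wrap case : the required flip fails, so the Φ's agree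
        rw [if_pos h0] at hne
        have hEq : Phigeo x₁ x₂ m Z y' = Phigeo x₁ x₂ m Z y := by
          rcases Stmt2.zmod2_cases (Phigeo x₁ x₂ m Z y') with h1 | h1 <;>
            rcases Stmt2.zmod2_cases (Phigeo x₁ x₂ m Z y) with h2 | h2 <;>
              rw [h1, h2] <;> first
                | rfl
                | (exact absurd (by rw [h1, h2]; decide) hne)
        have hmvy : y.1 = -1 := by linear_combination h0 - hcol
        have hvy : (y.1).val = m - 1 := by rw [hmvy]; exact zmod_val_neg_one (by omega)
        have hvy' : (y'.1).val = 0 := by rw [h0]; exact ZMod.val_zero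
        by_cases hP : Pgeo x₁ x₂ m Z y
        · have hP' : Pgeo x₁ x₂ m Z y' := by
            rw [← Phi_one_iff] at hP ⊢
            rw [hEq, hP]
          obtain ⟨z, hz, hrow, a, ha, he⟩ := hP
          obtain ⟨z', hz', hrow', a', ha', he'⟩ := hP'
          rw [arcI, mem_Icc, hvy, hcast] at ha
          rw [arcI, mem_Icc, hvy'] at ha'
          push_cast at ha'
          refine mkNP z hz z' hz'
            (rows_close x₁ x₂ m hm hx hleg hrow hrow') (a' + π - a) ?_ ?_
          · rw [abs_le]
            constructor <;> linarith [ha.1, ha.2, ha'.1, ha'.2, hmw, hw]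
          · rw [he, he', ← AC_coe_add]
            rw [show a + (π + (a' + π - a)) = a' + (1:ℤ) * (2*π) by push_cast; ring]
            rw [AC_coe_period]
        · have hP' : ¬ Pgeo x₁ x₂ m Z y' := by
            rw [← Phi_zero_iff] at hP ⊢
            rw [hEq, hP]
          obtain ⟨z, hz, hrow, a, ha, he⟩ := Y_not_P x₁ x₂ m Z hYy hP
          obtain ⟨z', hz', hrow', a', ha', he'⟩ := Y_not_P x₁ x₂ m Z hYy' hP'
          rw [arcI, mem_Icc, hvy, hcast] at ha
          rw [arcI, mem_Icc, hvy'] at ha'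
          push_cast at ha'
          refine mkNP z' hz' z hz
            (by rw [abs_sub_comm]; exact rows_close x₁ x₂ m hm hx hleg hrow hrow')
            (a - a' - π) ?_ ?_
          · rw [abs_le]
            constructor <;> linarith [ha.1, ha.2, ha'.1, ha'.2, hmw, hw]
          · rw [he, he', ← AC_coe_add]
            congr 1
            ring
      · -- non-wrap adjacent case : the Φ's must differ
        rw [if_neg h0, add_zero] at hne
        have hval : (y'.1).val = (y.1).val + 1 := by
          rw [hcol]
          exact zmod_val_add_one (by omega) y.1 (by rw [← hcol]; exact h0)
        by_cases hP : Pgeo x₁ x₂ m Z y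
        · have hP' : ¬ Pgeo x₁ x₂ m Z y' := by
            intro hP'
            exact hne (Phi_eq_of_both x₁ x₂ m Z (iff_of_true hP' hP))
          obtain ⟨z, hz, hrow, a, ha, he⟩ := hP
          obtain ⟨z', hz', hrow', a', ha', he'⟩ := Y_not_P x₁ x₂ m Z hYy' hP'
          rw [arcI, mem_Icc] at ha
          rw [arcI, mem_Icc, hval] at ha'
          push_cast at ha ha'
          refine mkNP z hz z' hz'
            (rows_close x₁ x₂ m hm hx hleg hrow hrow') (a' - a) ?_ ?_
          · rw [abs_le]
            constructor <;> linarith [ha.1, ha.2, ha'.1, ha'.2, hmw, hw]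
          · rw [he, he', ← AC_coe_add]
            congr 1
            ring
        · have hP' : Pgeo x₁ x₂ m Z y' := by
            by_contra hP'
            exact hne (Phi_eq_of_both x₁ x₂ m Z (iff_of_false hP' hP))
          obtain ⟨z, hz, hrow, a, ha, he⟩ := Y_not_P x₁ x₂ m Z hYy hP
          obtain ⟨z', hz', hrow', a', ha', he'⟩ := hP'
          rw [arcI, mem_Icc] at ha
          rw [arcI, mem_Icc, hval] at ha'
          push_cast at ha ha'
          refine mkNP z' hz' z hz
            (by rw [abs_sub_comm]; exact rows_close x₁ x₂ m hm hx hleg hrow hrow')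
            (a - a') ?_ ?_
          · rw [abs_le]
            constructor <;> linarith [ha.1, ha.2, ha'.1, ha'.2, hmw, hw]
          · rw [he, he', ← AC_coe_add]
            congr 1
            ring
  · push_neg at hHS
    obtain ⟨y, y', hYy, hYy', hleg, hcol, hne⟩ := hHS
    by_cases hP : Pgeo x₁ x₂ m Z y
    · have hP' : ¬ Pgeo x₁ x₂ m Z y' := by
        intro hP'
        exact hne (Phi_eq_of_both x₁ x₂ m Z (iff_of_true hP' hP))
      obtain ⟨z, hz, hrow, a, ha, he⟩ := hP
      obtain ⟨z', hz', hrow', a', ha', he'⟩ := Y_not_P x₁ x₂ m Z hYy' hP'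
      rw [arcI, mem_Icc] at ha
      rw [arcI, mem_Icc, hcol] at ha'
      refine mkNP z hz z' hz'
        (rows_close x₁ x₂ m hm hx hleg hrow hrow') (a' - a) ?_ ?_
      · rw [abs_le]
        constructor <;> linarith [ha.1, ha.2, ha'.1, ha'.2, hmw, hw]
      · rw [he, he', ← AC_coe_add]
        congr 1
        ring
    · have hP' : Pgeo x₁ x₂ m Z y' := by
        by_contra hP'
        exact hne (Phi_eq_of_both x₁ x₂ m Z (iff_of_false hP' hP))
      obtain ⟨z, hz, hrow, a, ha, he⟩ := Y_not_P x₁ x₂ m Z hYy hP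
      obtain ⟨z', hz', hrow', a', ha', he'⟩ := hP'
      rw [arcI, mem_Icc] at ha
      rw [arcI, mem_Icc, hcol] at ha'
      refine mkNP z' hz' z hz
        (by rw [abs_sub_comm]; exact rows_close x₁ x₂ m hm hx hleg hrow hrow')
        (a - a') ?_ ?_
      · rw [abs_le]
        constructor <;> linarith [ha.1, ha.2, ha'.1, ha'.2, hmw, hw]
      · rw [he, he', ← AC_coe_add]
        congr 1
        ring

end Scale

section Limit

variable (Z : Set Cyl)

lemma NP_all (x₁ x₂ : ℝ) (hx : x₁ ≤ x₂)
    (hZx1 : ∀ z ∈ Z, x₁ ≤ z.1) (hZx2 : ∀ z ∈ Z, z.1 ≤ x₂)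
    (hsep : ∀ γ : ℝ → Cyl, ContinuousOn γ (Icc (0 : ℝ) 1) →
      (∀ z ∈ Z, (γ 0).1 < z.1) → (∀ z ∈ Z, z.1 < (γ 1).1) →
      ∃ t ∈ Icc (0 : ℝ) 1, γ t ∈ Z) :
    ∀ ε > 0, NP Z ε := by
  intro ε hε
  obtain ⟨M, hM⟩ := exists_nat_gt (max ((2*(x₂ - x₁ + 2))/ε + 2) ((2*π)/ε))
  have hM1 : (2*(x₂ - x₁ + 2))/ε + 2 < M := lt_of_le_of_lt (le_max_left _ _) hM
  have hM2 : (2*π)/ε < M := lt_of_le_of_lt (le_max_right _ _) hM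
  set m := max M 3 with hm_def
  have hm3 : 3 ≤ m := le_max_right _ _
  have hmM : (M:ℝ) ≤ (m:ℝ) := by exact_mod_cast le_max_left M 3
  have hm2 : (0:ℝ) < (m:ℝ) - 2 := by
    have : (3:ℝ) ≤ (m:ℝ) := by exact_mod_cast hm3
    linarith
  have hm0 : (0:ℝ) < (m:ℝ) := by linarith
  have hδε : 2 * dA x₁ x₂ m ≤ ε := by
    have h1 : (2*(x₂ - x₁ + 2))/ε < (m:ℝ) - 2 := by linarith
    have h2 : 2*(x₂ - x₁ + 2) < ((m:ℝ) - 2) * ε := (div_lt_iff₀ hε).mp h1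
    rw [dA, ← mul_div_assoc, div_le_iff₀ hm2]
    linarith
  have hwε : 2 * wA m ≤ ε := by
    have h1 : (2*π)/ε < (m:ℝ) := by linarith
    have h2 : 2*π < (m:ℝ) * ε := (div_lt_iff₀ hε).mp h1
    rw [wA, ← mul_div_assoc, div_le_iff₀ hm0]
    linarith
  obtain ⟨z, hz, z', hz', hd, r, hr, he⟩ :=
    scale_NP x₁ x₂ m Z hm3 hx hZx1 hZx2 hsep
  exact ⟨z, hz, z', hz', hd.trans (max_le hδε hwε), r,
    hr.trans (max_le hδε hwε), he⟩

lemma limit (hcomp : IsCompact Z) (hall : ∀ ε > 0, NP Z ε) :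
    ∃ p ∈ Z, ((p.1, p.2 + ((π:ℝ) : AddCircle (2*π))) : Cyl) ∈ Z := by
  set S : ℕ → Set (AddCircle (2*π)) := fun i =>
    (fun a : ℝ => ((a : ℝ) : AddCircle (2*π))) '' Icc (π - 1/(i+1)) (π + 1/(i+1)) with hS
  set K : ℕ → Set (Cyl × Cyl) := fun i =>
    {q | q.1 ∈ Z ∧ q.2 ∈ Z ∧ |q.2.1 - q.1.1| ≤ 1/(i+1) ∧ q.2.2 - q.1.2 ∈ S i} with hK
  have hKne : ∀ i, (K i).Nonempty := by
    intro i
    have hpos : (0:ℝ) < 1/((i:ℝ)+1) := by positivity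
    obtain ⟨z, hz, z', hz', hd, r, hr, he⟩ := hall (1/((i:ℝ)+1)) hpos
    refine ⟨(z, z'), hz, hz', hd, ⟨π + r, ?_, ?_⟩⟩
    · rw [mem_Icc]
      obtain ⟨h1, h2⟩ := abs_le.mp hr
      constructor <;> linarith
    · rw [he]
      exact (add_sub_cancel_left _ _).symm
  have hKcl : ∀ i, IsClosed (K i) := by
    intro i
    have hZcl : IsClosed Z := hcomp.isClosed
    have hScl : IsClosed (S i) :=
      (isCompact_Icc.image AC_continuous).isClosed
    have hKi : K i = (Prod.fst ⁻¹' Z) ∩ ((Prod.snd ⁻¹' Z)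
        ∩ ({q : Cyl × Cyl | |q.2.1 - q.1.1| ≤ 1/(i+1)}
        ∩ ((fun q : Cyl × Cyl => q.2.2 - q.1.2) ⁻¹' S i))) := by
      ext q
      simp only [hK, mem_setOf_eq, mem_inter_iff, mem_preimage, and_assoc]
    rw [hKi]
    have hc1 : Continuous (fun q : Cyl × Cyl => q.2.1 - q.1.1) :=
      (continuous_fst.comp continuous_snd).sub (continuous_fst.comp continuous_fst)
    have hc2 : Continuous (fun q : Cyl × Cyl => q.2.2 - q.1.2) :=
      (continuous_snd.comp continuous_snd).sub (continuous_snd.comp continuous_fst)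
    refine (hZcl.preimage continuous_fst).inter ((hZcl.preimage continuous_snd).inter
      (IsClosed.inter ?_ (hScl.preimage hc2)))
    exact isClosed_le (continuous_abs.comp hc1) continuous_const
  have hKsub : ∀ i, K (i+1) ⊆ K i := by
    intro i q hq
    simp only [hK, hS, mem_setOf_eq, Nat.cast_add, Nat.cast_one] at hq ⊢
    obtain ⟨h1, h2, h3, h4⟩ := hq
    have hle : 1/((i:ℝ)+1+1) ≤ 1/((i:ℝ)+1) := by
      apply one_div_le_one_div_of_le
      · positivity
      · linarith
    exact ⟨h1, h2, le_trans h3 hle,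
      image_mono (Icc_subset_Icc (by linarith [hle]) (by linarith [hle])) h4⟩
  have hK0 : IsCompact (K 0) := by
    refine IsCompact.of_isClosed_subset (hcomp.prod hcomp) (hKcl 0) ?_
    intro q hq
    exact ⟨hq.1, hq.2.1⟩
  obtain ⟨q, hq⟩ := IsCompact.nonempty_iInter_of_sequence_nonempty_isCompact_isClosed
    K hKsub hKne hK0 hKcl
  have hmem : ∀ i, q ∈ K i := fun i => mem_iInter.mp hq i
  have hZp : q.1 ∈ Z := (hmem 0).1
  have hZp' : q.2 ∈ Z := (hmem 0).2.1
  have hfst : q.2.1 = q.1.1 := by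
    by_contra hne
    have hpos : 0 < |q.2.1 - q.1.1| := abs_pos.mpr (sub_ne_zero.mpr hne)
    obtain ⟨i, hi⟩ := exists_nat_one_div_lt hpos
    have h := (hmem i).2.2.1
    linarith
  have hsnd : q.2.2 = q.1.2 + ((π:ℝ) : AddCircle (2*π)) := by
    obtain ⟨a₀, ha₀, he₀⟩ := (hmem 0).2.2.2
    rw [mem_Icc] at ha₀
    have h01 : (1:ℝ)/((0:ℕ)+1) = 1 := by norm_num
    have key : ∀ i : ℕ, |a₀ - π| ≤ 1/((i:ℝ)+1) := by
      intro i
      obtain ⟨b, hb, heb⟩ := (hmem i).2.2.2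
      rw [mem_Icc] at hb
      have heb' : (b : AddCircle (2*π)) = q.2.2 - q.1.2 := heb
      have he₀' : (a₀ : AddCircle (2*π)) = q.2.2 - q.1.2 := he₀
      have hab : (b : AddCircle (2*π)) = (a₀ : AddCircle (2*π)) := heb'.trans he₀'.symm
      have h1i : 1/((i:ℝ)+1) ≤ 1 := by
        rw [div_le_one (by positivity)]
        have : (0:ℝ) ≤ i := Nat.cast_nonneg i
        linarith
      have hclose : |b - a₀| < 2*π := by
        have hpi := pi_gt_three
        rw [abs_lt]
        rw [h01] at ha₀
        constructor <;> linarith [hb.1, hb.2, ha₀.1, ha₀.2]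
      have hba : b = a₀ := AC_eq_of_close hab hclose
      rw [← hba, abs_le]
      constructor <;> linarith [hb.1, hb.2]
    have ha0pi : a₀ = π := by
      by_contra hne
      have hpos : 0 < |a₀ - π| := abs_pos.mpr (sub_ne_zero.mpr hne)
      obtain ⟨i, hi⟩ := exists_nat_one_div_lt hpos
      linarith [key i, hi]
    have h := sub_eq_iff_eq_add.mp he₀.symm
    rw [h, ha0pi]
    exact add_comm _ _
  refine ⟨q.1, hZp, ?_⟩
  have hq2 : q.2 = (q.1.1, q.1.2 + ((π:ℝ) : AddCircle (2*π))) := by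
    rw [Prod.ext_iff]
    exact ⟨hfst, hsnd⟩
  rw [← hq2]
  exact hZp'

end Limit

end

end Geo

/-- If a nonempty compact set `Z` in the cylinder separates the bottom from the top — i.e.
every continuous path starting strictly below all of `Z` (in the first coordinate) and ending
strictly above all of `Z` must meet `Z` — then `Z` intersects its half-rotation `R(Z)`. -/
theorem statement2 (Z : Set Cylinder) (hne : Z.Nonempty) (hcomp : IsCompact Z)
    (hsep : ∀ γ : ℝ → Cylinder, ContinuousOn γ (Icc (0 : ℝ) 1) →
      (∀ z ∈ Z, (γ 0).1 < z.1) → (∀ z ∈ Z, z.1 < (γ 1).1) →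
      ∃ t ∈ Icc (0 : ℝ) 1, γ t ∈ Z) :
    (Z ∩ halfRotation '' Z).Nonempty := by
  obtain ⟨zmin, hzminZ, hmin⟩ := hcomp.exists_isMinOn hne continuous_fst.continuousOn
  obtain ⟨zmax, hzmaxZ, hmax⟩ := hcomp.exists_isMaxOn hne continuous_fst.continuousOn
  have hmin' : ∀ z ∈ Z, zmin.1 ≤ z.1 := fun z hz => hmin hz
  have hmax' : ∀ z ∈ Z, z.1 ≤ zmax.1 := fun z hz => hmax hz
  have hx : zmin.1 ≤ zmax.1 := hmin' zmax hzmaxZ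
  have hall := Geo.NP_all Z zmin.1 zmax.1 hx hmin' hmax' hsep
  obtain ⟨p, hp, hq⟩ := Geo.limit Z hcomp hall
  exact ⟨(p.1, p.2 + ((π:ℝ) : AddCircle (2 * π))), hq, ⟨p, hp, rfl⟩⟩
end
end

section
/- Let K be a convex body in ℝ² and let f be a function defined on convex bodies in ℝ² that is continuous with respect to the Hausdorff metric. Then there exist a unit vector n ∈ ℝ² and a real number c such that the two convex bodies K⁻ = K ∩ {x : ⟨x, n⟩ ≤ c} and K⁺ = K ∩ {x : ⟨x, n⟩ ≥ c} have equal area (two-dimensional Lebesgue measure) and satisfy f(K⁻) = f(K⁺). -/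
open MeasureTheory Metric Set
open scoped RealInnerProductSpace

noncomputable section

/-- A convex body in `ℝ^d`: a compact convex set with nonempty interior. -/
def IsConvexBody {d : ℕ} (K : Set (EuclideanSpace ℝ (Fin d))) : Prop :=
  IsCompact K ∧ Convex ℝ K ∧ (interior K).Nonempty

/-- The space of convex bodies in `ℝ^d` (compact convex sets with nonempty interior),
topologized via the Hausdorff metric on nonempty compact subsets. -/
abbrev ConvexBodySpace (d : ℕ) :=
  {K : TopologicalSpace.NonemptyCompacts (EuclideanSpace ℝ (Fin d)) //
    Convex ℝ (K : Set (EuclideanSpace ℝ (Fin d))) ∧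
    (interior (K : Set (EuclideanSpace ℝ (Fin d)))).Nonempty}

def ConvexBodySpace.toSet {d : ℕ} (K : ConvexBodySpace d) :
    Set (EuclideanSpace ℝ (Fin d)) := K.1

/-- Build a point of `ConvexBodySpace d` from a set satisfying `IsConvexBody`. -/
def ConvexBodySpace.mk' {d : ℕ} (S : Set (EuclideanSpace ℝ (Fin d)))
    (h : IsConvexBody S) : ConvexBodySpace d :=
  ⟨⟨⟨S, h.1⟩, h.2.2.mono interior_subset⟩, h.2.1, h.2.2⟩

namespace S11

abbrev E2 := EuclideanSpace ℝ (Fin 2)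

lemma cont_inner (n : E2) : Continuous fun x : E2 => ⟪x, n⟫ :=
  continuous_id.inner continuous_const
lemma hyperplane_null (n : E2) (hn : n ≠ 0) (c : ℝ) :
    volume {x : E2 | ⟪x, n⟫ = c} = 0 := by
  set x0 : E2 := (c / ‖n‖ ^ 2) • n with hx0
  have hx0c : ⟪x0, n⟫ = c := by
    rw [hx0, real_inner_smul_left, real_inner_self_eq_norm_sq]
    field_simp [hn]
  have hker : {x : E2 | ⟪x, n⟫ = c} = (fun x => x - x0) ⁻¹' ((LinearMap.ker (innerSL ℝ n : E2 →ₗ[ℝ] ℝ) : Submodule ℝ E2) : Set E2) := by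
    ext x
    simp only [mem_setOf_eq, mem_preimage, SetLike.mem_coe, LinearMap.mem_ker,
      ContinuousLinearMap.coe_coe, innerSL_apply_apply]
    have hx0c' : ⟪n, x0⟫ = c := by rw [real_inner_comm]; exact hx0c
    rw [inner_sub_right, hx0c']
    rw [real_inner_comm n x]
    constructor <;> intro h <;> linarith
  rw [hker]
  have : (fun x : E2 => x - x0) ⁻¹' ((LinearMap.ker (innerSL ℝ n : E2 →ₗ[ℝ] ℝ) : Submodule ℝ E2) : Set E2)
      = (fun x : E2 => x + (-x0)) ⁻¹' ((LinearMap.ker (innerSL ℝ n : E2 →ₗ[ℝ] ℝ) : Submodule ℝ E2) : Set E2) := by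
    simp [sub_eq_add_neg]
  rw [this, measure_preimage_add_right]
  apply Measure.addHaar_submodule
  intro htop
  have : n ∈ LinearMap.ker (innerSL ℝ n : E2 →ₗ[ℝ] ℝ) := htop ▸ Submodule.mem_top
  simp only [LinearMap.mem_ker, ContinuousLinearMap.coe_coe, innerSL_apply_apply] at this
  rw [real_inner_self_eq_norm_sq] at this
  exact hn (by simpa using this)
lemma halfspace_meas (n : E2) (c : ℝ) : MeasurableSet {x : E2 | ⟪x, n⟫ ≤ c} :=
  (isClosed_le (cont_inner n) continuous_const).measurableSet

variable (A : Set E2)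
def Fr (n : E2) (c : ℝ) : ℝ := (volume (A ∩ {x | ⟪x, n⟫ ≤ c})).toReal
def half : ℝ := (volume A).toReal / 2
open Classical in
def cv (n : E2) : ℝ := if h : ∃ c, Fr A n c = half A then h.choose else 0

lemma Fr_continuousAt (hA : IsCompact A) (n0 : E2) (hn0 : n0 ≠ 0) (c0 : ℝ) :
    ContinuousAt (fun p : E2 × ℝ => Fr A p.1 p.2) (n0, c0) := by
  set μ := volume.restrict A with hμ
  set F : E2 × ℝ → E2 → ℝ := fun p => Set.indicator {x : E2 | ⟪x, p.1⟫ ≤ p.2} 1 with hF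
  have key : ContinuousAt (fun p : E2 × ℝ => ∫ a, F p a ∂μ) (n0, c0) := by
    apply MeasureTheory.continuousAt_of_dominated (bound := fun _ => (1:ℝ))
    · filter_upwards with p
      exact (measurable_const.indicator (halfspace_meas p.1 p.2)).aestronglyMeasurable
    · filter_upwards with p
      filter_upwards with a
      simp only [hF, Set.indicator_apply]
      split <;> simp
    · exact MeasureTheory.integrableOn_const hA.measure_ne_top
    · have hnull : μ {a : E2 | ⟪a, n0⟫ = c0} = 0 :=
        le_antisymm ((Measure.restrict_apply_le _ _).trans (hyperplane_null n0 hn0 c0).le) zero_le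
      rw [← MeasureTheory.compl_mem_ae_iff] at hnull
      filter_upwards [hnull] with a ha
      simp only [mem_compl_iff, mem_setOf_eq] at ha
      rcases lt_or_gt_of_ne ha with h | h
      · have hev : (fun _ : E2 × ℝ => F (n0, c0) a) =ᶠ[nhds (n0, c0)] fun p => F p a := by
          have hopen : IsOpen {p : E2 × ℝ | ⟪a, p.1⟫ < p.2} :=
            isOpen_lt (continuous_const.inner continuous_fst) continuous_snd
          filter_upwards [hopen.mem_nhds h] with p hp
          simp only [hF, Set.indicator_apply, mem_setOf_eq, if_pos h.le, if_pos hp.le]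
        exact continuousAt_const.congr hev
      · have hev : (fun _ : E2 × ℝ => F (n0, c0) a) =ᶠ[nhds (n0, c0)] fun p => F p a := by
          have hopen : IsOpen {p : E2 × ℝ | p.2 < ⟪a, p.1⟫} :=
            isOpen_lt continuous_snd (continuous_const.inner continuous_fst)
          filter_upwards [hopen.mem_nhds h] with p hp
          simp only [hF, Set.indicator_apply, mem_setOf_eq, if_neg (not_le.2 h),
            if_neg (not_le.2 hp)]
        exact continuousAt_const.congr hev
  have heq : (fun p : E2 × ℝ => ∫ a, F p a ∂μ) = fun p : E2 × ℝ => Fr A p.1 p.2 := by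
    funext p
    rw [hF, MeasureTheory.integral_indicator_one (halfspace_meas p.1 p.2), hμ,
      Measure.real, Measure.restrict_apply (halfspace_meas p.1 p.2), Set.inter_comm, Fr]
  rwa [heq] at key

variable {A}

lemma vol_inter_ne_top (hA : IsCompact A) (S : Set E2) : volume (A ∩ S) ≠ ⊤ :=
  ne_top_of_le_ne_top hA.measure_ne_top (measure_mono inter_subset_left)

lemma Fr_mono (hA : IsCompact A) (n : E2) : Monotone (Fr A n) := fun c c' hcc =>
  ENNReal.toReal_mono (vol_inter_ne_top hA _)
    (measure_mono (inter_subset_inter_right _ fun x hx => le_trans hx hcc))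

lemma vol_lt_eq (hA : IsCompact A) (n : E2) (hn : n ≠ 0) (c : ℝ) :
    volume (A ∩ {x | ⟪x, n⟫ < c}) = volume (A ∩ {x | ⟪x, n⟫ ≤ c}) := by
  have h1 : A ∩ {x : E2 | ⟪x, n⟫ < c} ⊆ A ∩ {x | ⟪x, n⟫ ≤ c} :=
    inter_subset_inter_right _ fun x (hx : ⟪x, n⟫ < c) => le_of_lt hx
  refine le_antisymm (measure_mono h1) ?_
  calc volume (A ∩ {x | ⟪x, n⟫ ≤ c})
      ≤ volume ((A ∩ {x | ⟪x, n⟫ < c}) ∪ {x : E2 | ⟪x, n⟫ = c}) := by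
        apply measure_mono
        rintro x ⟨hxA, hxc⟩
        have hxc' : ⟪x, n⟫ ≤ c := hxc
        rcases lt_or_eq_of_le hxc' with h | h
        · exact Or.inl ⟨hxA, h⟩
        · exact Or.inr h
    _ ≤ volume (A ∩ {x | ⟪x, n⟫ < c}) + volume {x : E2 | ⟪x, n⟫ = c} := measure_union_le _ _
    _ = volume (A ∩ {x | ⟪x, n⟫ < c}) := by rw [hyperplane_null n hn c, add_zero]

lemma vol_compl (hA : IsCompact A) (n : E2) (hn : n ≠ 0) (c : ℝ) :
    volume (A ∩ {x | c ≤ ⟪x, n⟫}) = volume A - volume (A ∩ {x | ⟪x, n⟫ ≤ c}) := by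
  have hsplit : volume (A ∩ {x | c ≤ ⟪x, n⟫}) + volume (A \ {x | c ≤ ⟪x, n⟫}) = volume A :=
    measure_inter_add_diff A (isClosed_le continuous_const (cont_inner n)).measurableSet
  have hdiff : A \ {x : E2 | c ≤ ⟪x, n⟫} = A ∩ {x | ⟪x, n⟫ < c} := by
    ext x; simp [Set.mem_diff, not_le]
  rw [hdiff, vol_lt_eq hA n hn c] at hsplit
  rw [← hsplit, ENNReal.add_sub_cancel_right (vol_inter_ne_top hA _)]

lemma vol_pos (hint : (interior A).Nonempty) : 0 < volume A :=
  lt_of_lt_of_le (isOpen_interior.measure_pos volume hint) (measure_mono interior_subset)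

lemma volA_toReal_pos (hA : IsCompact A) (hint : (interior A).Nonempty) :
    0 < (volume A).toReal :=
  ENNReal.toReal_pos (vol_pos hint).ne' hA.measure_ne_top

lemma exists_lt (hA : IsCompact A) (n : E2) (c : ℝ) (hn : n ≠ 0) (h : 0 < Fr A n c) :
    ∃ x ∈ A, ⟪x, n⟫ < c := by
  by_contra hcon
  push_neg at hcon
  have hsub : A ∩ {x | ⟪x, n⟫ ≤ c} ⊆ {x : E2 | ⟪x, n⟫ = c} :=
    fun x ⟨hxA, hxc⟩ => le_antisymm hxc (hcon x hxA)
  have : volume (A ∩ {x | ⟪x, n⟫ ≤ c}) = 0 :=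
    measure_mono_null hsub (hyperplane_null n hn c)
  rw [Fr, this] at h; simp at h

lemma exists_gt (hA : IsCompact A) (n : E2) (c : ℝ) (h : Fr A n c < (volume A).toReal) :
    ∃ x ∈ A, c < ⟪x, n⟫ := by
  by_contra hcon
  push_neg at hcon
  have : A ∩ {x | ⟪x, n⟫ ≤ c} = A := inter_eq_left.2 fun x hx => hcon x hx
  rw [Fr, this] at h
  exact lt_irrefl _ h

/-- scaled ball inside a convex set -/
lemma ball_combo (hconv : Convex ℝ A) {x0 p : E2} {r lam : ℝ} (hball : ball x0 r ⊆ A)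
    (hp : p ∈ A) (hl0 : 0 ≤ lam) (hl1 : lam < 1) :
    ball (x0 + lam • (p - x0)) ((1 - lam) * r) ⊆ A := by
  intro z hz
  set y := x0 + lam • (p - x0) with hy
  have h1l : (0:ℝ) < 1 - lam := by linarith
  set z' := x0 + (1 - lam)⁻¹ • (z - y) with hz'
  have hz'mem : z' ∈ ball x0 r := by
    rw [mem_ball, hz', dist_eq_norm]
    simp only [add_sub_cancel_left]
    rw [norm_smul, Real.norm_eq_abs, abs_of_pos (inv_pos.2 h1l)]
    rw [mem_ball, dist_eq_norm] at hz
    rw [inv_mul_lt_iff₀ h1l]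
    linarith [hz]
  have hcombo : z = (1 - lam) • z' + lam • p := by
    rw [hz', hy]
    match_scalars <;> field_simp <;> ring
  rw [hcombo]
  exact hconv (hball hz'mem) hp (by linarith) hl0 (by ring)

lemma inner_combo (n x0 p : E2) (lam : ℝ) :
    ⟪x0 + lam • (p - x0), n⟫ = ⟪x0, n⟫ + lam * (⟪p, n⟫ - ⟪x0, n⟫) := by
  simp [inner_add_left, real_inner_smul_left, inner_sub_left]

/-- helper: a ball centered on the level set {⟪·,n⟫ = t} inside A -/
lemma ball_on_level (hconv : Convex ℝ A) {x0 p : E2} {r t : ℝ} (hr : 0 < r)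
    (hball : ball x0 r ⊆ A) (hp : p ∈ A) (n : E2)
    (h0 : ⟪x0, n⟫ ≤ t) (hpt : t < ⟪p, n⟫) :
    ∃ y ρ, 0 < ρ ∧ ⟪y, n⟫ = t ∧ ball y ρ ⊆ A := by
  set v0 := ⟪x0, n⟫
  set vp := ⟪p, n⟫
  have hd : 0 < vp - v0 := by simp only [v0, vp]; linarith
  set lam := (t - v0) / (vp - v0) with hlam
  have hl0 : 0 ≤ lam := div_nonneg (by simp only [v0]; linarith) hd.le
  have hl1 : lam < 1 := by
    rw [hlam, div_lt_one hd]
    simp only [v0, vp]; linarith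
  refine ⟨x0 + lam • (p - x0), (1 - lam) * r, mul_pos (by linarith) hr, ?_, ball_combo hconv hball hp hl0 hl1⟩
  rw [inner_combo, hlam, div_mul_cancel₀ _ hd.ne']
  simp only [v0]; ring

/-- a ball inside the open slab -/
lemma slab_pos (hA : IsCompact A) (hconv : Convex ℝ A) (hint : (interior A).Nonempty)
    {n : E2} (hn : ‖n‖ = 1) {c1 c2 : ℝ} (hc : c1 < c2)
    {p q : E2} (hp : p ∈ A) (hq : q ∈ A) (hpv : c2 < ⟪p, n⟫) (hqv : ⟪q, n⟫ < c1) :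
    0 < volume (A ∩ {x | c1 < ⟪x, n⟫ ∧ ⟪x, n⟫ < c2}) := by
  obtain ⟨x0, hx0⟩ := hint
  obtain ⟨r, hr, hball⟩ := Metric.isOpen_iff.1 isOpen_interior x0 hx0
  have hballA : ball x0 r ⊆ A := hball.trans interior_subset
  set t := (c1 + c2) / 2 with ht
  have ht1 : c1 < t := by rw [ht]; linarith
  have ht2 : t < c2 := by rw [ht]; linarith
  have key : ∃ y ρ, 0 < ρ ∧ ⟪y, n⟫ = t ∧ ball y ρ ⊆ A := by
    rcases le_or_gt ⟪x0, n⟫ t with h | h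
    · exact ball_on_level hconv hr hballA hp n h (lt_trans ht2 hpv)
    · obtain ⟨y, ρ, hρ, hyt, hysub⟩ :=
        ball_on_level (t := -t) hconv hr hballA hq (-n)
          (by rw [inner_neg_right]; linarith) (by rw [inner_neg_right]; linarith)
      rw [inner_neg_right] at hyt
      exact ⟨y, ρ, hρ, neg_inj.mp hyt, hysub⟩
  obtain ⟨y, ρ, hρ, hyt, hysub⟩ := key
  set ρ' := min ρ ((c2 - c1) / 2) with hρ'
  have hρ'pos : 0 < ρ' := lt_min hρ (by linarith)
  have hsub : ball y ρ' ⊆ A ∩ {x | c1 < ⟪x, n⟫ ∧ ⟪x, n⟫ < c2} := by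
    intro z hz
    have hzA : z ∈ A := hysub (mem_ball.2 (lt_of_lt_of_le (mem_ball.1 hz) (min_le_left _ _)))
    have hinner : |⟪z, n⟫ - t| < (c2 - c1) / 2 := by
      rw [← hyt, ← inner_sub_left]
      calc |⟪z - y, n⟫| ≤ ‖z - y‖ * ‖n‖ := abs_real_inner_le_norm _ _
        _ = ‖z - y‖ := by rw [hn, mul_one]
        _ < (c2 - c1) / 2 := lt_of_lt_of_le (by rw [← dist_eq_norm]; exact mem_ball.1 hz)
            (min_le_right _ _)
    rw [abs_lt, ht] at hinner
    exact ⟨hzA, by constructor <;> linarith [hinner.1, hinner.2]⟩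
  exact lt_of_lt_of_le (measure_ball_pos volume y hρ'pos) (measure_mono hsub)

lemma Fr_strict (hA : IsCompact A) (hconv : Convex ℝ A) (hint : (interior A).Nonempty)
    {n : E2} (hn : ‖n‖ = 1) {c1 c2 : ℝ} (hc : c1 < c2)
    (h1pos : 0 < Fr A n c1) (h2lt : Fr A n c2 < (volume A).toReal) :
    Fr A n c1 < Fr A n c2 := by
  have hn0 : n ≠ 0 := fun h => by rw [h] at hn; simp at hn
  obtain ⟨q, hq, hqv⟩ := exists_lt hA n c1 hn0 h1pos
  obtain ⟨p, hp, hpv⟩ := exists_gt hA n c2 h2lt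
  have hslab := slab_pos hA hconv hint hn hc hp hq hpv hqv
  set slab := A ∩ {x : E2 | c1 < ⟪x, n⟫ ∧ ⟪x, n⟫ < c2} with hslabdef
  have hslabmeas : MeasurableSet slab :=
    hA.measurableSet.inter ((isOpen_lt continuous_const (cont_inner n)).inter
      (isOpen_lt (cont_inner n) continuous_const)).measurableSet
  have hdisj : Disjoint (A ∩ {x : E2 | ⟪x, n⟫ ≤ c1}) slab := by
    rw [Set.disjoint_left]
    rintro x ⟨_, hx1⟩ ⟨_, hx2, _⟩
    exact absurd (hx1 : ⟪x, n⟫ ≤ c1) (not_le.2 hx2)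
  have hsub : (A ∩ {x : E2 | ⟪x, n⟫ ≤ c1}) ∪ slab ⊆ A ∩ {x : E2 | ⟪x, n⟫ ≤ c2} :=
    union_subset (inter_subset_inter_right _ fun x (hx : ⟪x, n⟫ ≤ c1) => le_trans hx hc.le)
      (inter_subset_inter_right _ fun x hx => (hx.2 : ⟪x, n⟫ < c2).le)
  have hvlt : volume (A ∩ {x : E2 | ⟪x, n⟫ ≤ c1}) < volume (A ∩ {x : E2 | ⟪x, n⟫ ≤ c2}) := by
    calc volume (A ∩ {x : E2 | ⟪x, n⟫ ≤ c1})
        < volume (A ∩ {x : E2 | ⟪x, n⟫ ≤ c1}) + volume slab :=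
          ENNReal.lt_add_right (vol_inter_ne_top hA _) hslab.ne'
      _ = volume ((A ∩ {x : E2 | ⟪x, n⟫ ≤ c1}) ∪ slab) := (measure_union hdisj hslabmeas).symm
      _ ≤ volume (A ∩ {x : E2 | ⟪x, n⟫ ≤ c2}) := measure_mono hsub
  exact (ENNReal.toReal_lt_toReal (vol_inter_ne_top hA _) (vol_inter_ne_top hA _)).2 hvlt

lemma half_pos (hA : IsCompact A) (hint : (interior A).Nonempty) : 0 < half A := by
  have := volA_toReal_pos hA hint; rw [half]; linarith

lemma half_lt (hA : IsCompact A) (hint : (interior A).Nonempty) :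
    half A < (volume A).toReal := by
  have := volA_toReal_pos hA hint; rw [half]; linarith

lemma cv_unique (hA : IsCompact A) (hconv : Convex ℝ A) (hint : (interior A).Nonempty)
    {n : E2} (hn : ‖n‖ = 1) {c1 c2 : ℝ}
    (h1 : Fr A n c1 = half A) (h2 : Fr A n c2 = half A) : c1 = c2 := by
  by_contra hne
  rcases Ne.lt_or_gt hne with h | h
  · have := Fr_strict hA hconv hint hn h (h1 ▸ half_pos hA hint) (h2 ▸ half_lt hA hint)
    rw [h1, h2] at this; exact lt_irrefl _ this
  · have := Fr_strict hA hconv hint hn h (h2 ▸ half_pos hA hint) (h1 ▸ half_lt hA hint)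
    rw [h1, h2] at this; exact lt_irrefl _ this

lemma Fr_continuous_c (hA : IsCompact A) {n : E2} (hn0 : n ≠ 0) :
    Continuous (fun c => Fr A n c) := by
  rw [continuous_iff_continuousAt]
  intro c
  exact (Fr_continuousAt A hA n hn0 c).comp ((continuous_const.prodMk continuous_id).continuousAt)

lemma cv_exists (hA : IsCompact A) {n : E2} (hn0 : n ≠ 0) : ∃ c, Fr A n c = half A := by
  obtain ⟨R, hR⟩ : ∃ R, A ⊆ closedBall 0 R := hA.isBounded.subset_closedBall 0
  set B := |R| * ‖n‖ + 1 with hB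
  have hBpos : 0 < B := by positivity
  have hbound : ∀ x ∈ A, |⟪x, n⟫| ≤ |R| * ‖n‖ := by
    intro x hx
    calc |⟪x, n⟫| ≤ ‖x‖ * ‖n‖ := abs_real_inner_le_norm _ _
      _ ≤ |R| * ‖n‖ := by
          have : ‖x‖ ≤ R := by simpa using hR hx
          have : ‖x‖ ≤ |R| := this.trans (le_abs_self R)
          exact mul_le_mul_of_nonneg_right this (norm_nonneg n)
  have hlow : Fr A n (-B) = 0 := by
    have : A ∩ {x : E2 | ⟪x, n⟫ ≤ -B} = ∅ := by
      ext x
      simp only [mem_inter_iff, mem_setOf_eq, mem_empty_iff_false, iff_false, not_and]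
      intro hx
      have := hbound x hx
      have := abs_le.1 this
      rw [hB]; push_neg; linarith [this.1]
    rw [Fr, this]; simp
  have hhigh : Fr A n B = (volume A).toReal := by
    have : A ∩ {x : E2 | ⟪x, n⟫ ≤ B} = A := inter_eq_left.2 fun x hx => by
      have := (abs_le.1 (hbound x hx)).2
      simp only [mem_setOf_eq]; rw [hB]; linarith
    rw [Fr, this]
  have hcont : ContinuousOn (fun c => Fr A n c) (Icc (-B) B) :=
    (Fr_continuous_c hA hn0).continuousOn
  have hmem : half A ∈ Icc (Fr A n (-B)) (Fr A n B) := by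
    rw [hlow, hhigh, half]
    constructor
    · positivity
    · have : (0:ℝ) ≤ (volume A).toReal := ENNReal.toReal_nonneg
      linarith
  obtain ⟨c, _, hcv⟩ := intermediate_value_Icc (by linarith : -B ≤ B) hcont hmem
  exact ⟨c, hcv⟩

lemma cv_spec (hA : IsCompact A) {n : E2} (hn : ‖n‖ = 1) : Fr A n (cv A n) = half A := by
  have h := cv_exists hA (n := n) (fun h0 => by rw [h0] at hn; simp at hn)
  rw [cv, dif_pos h]
  exact h.choose_spec

lemma cv_neg (hA : IsCompact A) (hconv : Convex ℝ A) (hint : (interior A).Nonempty)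
    {n : E2} (hn : ‖n‖ = 1) : cv A (-n) = - cv A n := by
  have hn0 : n ≠ 0 := fun h0 => by rw [h0] at hn; simp at hn
  have hnn : ‖(-n : E2)‖ = 1 := by rwa [norm_neg]
  have hset : A ∩ {x : E2 | ⟪x, -n⟫ ≤ -(cv A n)} = A ∩ {x : E2 | cv A n ≤ ⟪x, n⟫} := by
    ext x
    simp only [mem_inter_iff, mem_setOf_eq, inner_neg_right]
    constructor <;> rintro ⟨h1, h2⟩ <;> exact ⟨h1, by linarith⟩
  have hFr : Fr A (-n) (-(cv A n)) = half A := by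
    rw [Fr, hset, vol_compl hA n hn0, ENNReal.toReal_sub_of_le (measure_mono inter_subset_left)
      hA.measure_ne_top]
    have := cv_spec hA hn
    rw [Fr] at this
    rw [this, half]
    ring
  exact cv_unique hA hconv hint hnn (cv_spec hA hnn) hFr


lemma Fr_continuous_n (hA : IsCompact A) (c : ℝ) {n0 : E2} (hn0 : n0 ≠ 0) :
    ContinuousAt (fun n => Fr A n c) n0 := by
  have h1 : ContinuousAt (fun n : E2 => (n, c)) n0 :=
    (continuous_id.prodMk continuous_const).continuousAt
  exact ContinuousAt.comp (x := n0) (f := fun n : E2 => (n, c))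
    (Fr_continuousAt A hA n0 hn0 c) h1

lemma cv_cont (hA : IsCompact A) (hconv : Convex ℝ A) (hint : (interior A).Nonempty)
    {n0 : E2} (hn0 : ‖n0‖ = 1) :
    ∀ ε > 0, ∃ δ > 0, ∀ n : E2, ‖n‖ = 1 → ‖n - n0‖ < δ → |cv A n - cv A n0| ≤ ε := by
  intro ε hε
  have hn00 : n0 ≠ 0 := fun h0 => by rw [h0] at hn0; simp at hn0
  set c0 := cv A n0 with hc0
  have hspec0 := cv_spec hA hn0
  have hlow : Fr A n0 (c0 - ε) < half A := by
    rcases lt_or_eq_of_le ((Fr_mono hA n0 (by linarith : c0 - ε ≤ c0)).trans_eq hspec0) with h | h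
    · exact h
    · exact absurd (cv_unique hA hconv hint hn0 h hspec0) (by linarith)
  have hhigh : half A < Fr A n0 (c0 + ε) := by
    rcases lt_or_eq_of_le (hspec0 ▸ Fr_mono hA n0 (by linarith : c0 ≤ c0 + ε)) with h | h
    · exact h
    · exact absurd (cv_unique hA hconv hint hn0 hspec0 h.symm) (by linarith)
  have hcont1 := Fr_continuous_n hA (c0 - ε) hn00
  have hcont2 := Fr_continuous_n hA (c0 + ε) hn00
  have hev : ∀ᶠ n : E2 in nhds n0, Fr A n (c0 - ε) < half A ∧ half A < Fr A n (c0 + ε) :=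
    (hcont1.eventually_lt continuousAt_const hlow).and
      (continuousAt_const.eventually_lt hcont2 hhigh)
  obtain ⟨δ, hδpos, hδ⟩ := Metric.eventually_nhds_iff.1 hev
  refine ⟨δ, hδpos, fun n hn hdist => ?_⟩
  have hd : dist n n0 < δ := by rwa [dist_eq_norm]
  obtain ⟨h1, h2⟩ := hδ hd
  have hspec := cv_spec hA hn
  have hge : c0 - ε ≤ cv A n := by
    by_contra hcon
    push_neg at hcon
    have := (Fr_mono hA n hcon.le).trans_lt h1
    rw [hspec] at this; exact lt_irrefl _ this
  have hle : cv A n ≤ c0 + ε := by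
    by_contra hcon
    push_neg at hcon
    have := h2.trans_le (Fr_mono hA n hcon.le)
    rw [hspec] at this; exact lt_irrefl _ this
  rw [abs_le]; constructor <;> linarith

/-- an interior point of A strictly below the cut level -/
lemma exists_interior_below (hA : IsCompact A) (hconv : Convex ℝ A)
    (hint : (interior A).Nonempty) {n : E2} (hn : ‖n‖ = 1) :
    ∃ x ∈ interior A, ⟪x, n⟫ < cv A n := by
  have hn0 : n ≠ 0 := fun h0 => by rw [h0] at hn; simp at hn
  set c := cv A n with hc
  have hFr : 0 < Fr A n c := (cv_spec hA hn) ▸ half_pos hA hint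
  obtain ⟨w, hw, hwv⟩ := exists_lt hA n c hn0 hFr
  obtain ⟨x0, hx0⟩ := hint
  set v0 := ⟪x0, n⟫ with hv0
  set vw := ⟪w, n⟫ with hvw
  set D := |v0 - vw| with hD
  have hD0 : 0 ≤ D := abs_nonneg _
  set lam := min (1/2) ((c - vw) / (2 * (D + 1))) with hlam
  have hlampos : 0 < lam := lt_min (by norm_num) (div_pos (by linarith) (by positivity))
  have hlamle : lam ≤ (c - vw) / (2 * (D + 1)) := min_le_right _ _
  have hlam1 : lam < 1 := lt_of_le_of_lt (min_le_left _ _) (by norm_num)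
  refine ⟨lam • x0 + (1 - lam) • w,
    hconv.combo_interior_self_mem_interior hx0 hw hlampos (by linarith) (by ring), ?_⟩
  have hval : ⟪lam • x0 + (1 - lam) • w, n⟫ = vw + lam * (v0 - vw) := by
    rw [inner_add_left, real_inner_smul_left, real_inner_smul_left, ← hv0, ← hvw]; ring
  rw [hval]
  have h1 : lam * (v0 - vw) ≤ lam * D := mul_le_mul_of_nonneg_left (le_abs_self _) hlampos.le
  have h2 : lam * D ≤ (c - vw) / (2 * (D + 1)) * D := mul_le_mul_of_nonneg_right hlamle hD0
  have h3 : (c - vw) / (2 * (D + 1)) * D < c - vw := by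
    rw [div_mul_eq_mul_div, div_lt_iff₀ (by positivity)]
    nlinarith
  linarith

lemma body_isConvexBody (hA : IsCompact A) (hconv : Convex ℝ A)
    (hint : (interior A).Nonempty) {n : E2} (hn : ‖n‖ = 1) :
    IsConvexBody (A ∩ {x | ⟪x, n⟫ ≤ cv A n}) := by
  refine ⟨hA.inter_right (isClosed_le (cont_inner n) continuous_const),
    hconv.inter (convex_halfSpace_le ⟨fun x y => inner_add_left x y n, fun c x => real_inner_smul_left x n c⟩ _), ?_⟩
  obtain ⟨x, hxint, hxv⟩ := exists_interior_below hA hconv hint hn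
  have hopen : IsOpen (interior A ∩ {x : E2 | ⟪x, n⟫ < cv A n}) :=
    isOpen_interior.inter (isOpen_lt (cont_inner n) continuous_const)
  have hsub : interior A ∩ {x : E2 | ⟪x, n⟫ < cv A n} ⊆ A ∩ {x | ⟪x, n⟫ ≤ cv A n} :=
    fun y ⟨h1, h2⟩ => ⟨interior_subset h1, show ⟪y, n⟫ ≤ cv A n from le_of_lt h2⟩
  exact ⟨x, (hopen.subset_interior_iff.2 hsub) ⟨hxint, hxv⟩⟩


lemma inner_close {n n0 x : E2} {R : ℝ} (hx : ‖x‖ ≤ R) :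
    |⟪x, n⟫ - ⟪x, n0⟫| ≤ R * ‖n - n0‖ := by
  rw [← inner_sub_right]
  calc |⟪x, n - n0⟫| ≤ ‖x‖ * ‖n - n0‖ := abs_real_inner_le_norm _ _
    _ ≤ R * ‖n - n0‖ := mul_le_mul_of_nonneg_right hx (norm_nonneg _)

lemma pull_in (hconv : Convex ℝ A) {m : E2} (hm : ‖m‖ = 1) {d R δ0 η : ℝ}
    {xs : E2} (hxs : xs ∈ A) (hxsv : ⟪xs, m⟫ ≤ d - δ0 / 2) (hδ0 : 0 < δ0)
    (hη : 0 ≤ η) (hηδ : η ≤ δ0 / 4) (hR : ∀ z ∈ A, ‖z‖ ≤ R)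
    {x : E2} (hx : x ∈ A) (hxv : ⟪x, m⟫ ≤ d + η) :
    ∃ y ∈ A ∩ {z : E2 | ⟪z, m⟫ ≤ d}, dist x y ≤ 4 * R * η / δ0 := by
  set t := 2 * η / δ0 with htdef
  have ht0 : 0 ≤ t := by positivity
  have ht1 : t ≤ 1 / 2 := by
    rw [htdef, div_le_iff₀ hδ0]; linarith
  refine ⟨(1 - t) • x + t • xs, ⟨hconv hx hxs (by linarith) ht0 (by ring), ?_⟩, ?_⟩
  · show ⟪(1 - t) • x + t • xs, m⟫ ≤ d
    rw [inner_add_left, real_inner_smul_left, real_inner_smul_left]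
    have h1 : (1 - t) * ⟪x, m⟫ ≤ (1 - t) * (d + η) :=
      mul_le_mul_of_nonneg_left hxv (by linarith)
    have h2 : t * ⟪xs, m⟫ ≤ t * (d - δ0 / 2) := mul_le_mul_of_nonneg_left hxsv ht0
    have h3 : t * (δ0 / 2) = η := by rw [htdef]; field_simp
    nlinarith [mul_nonneg ht0 hη]
  · have : x - ((1 - t) • x + t • xs) = t • (x - xs) := by module
    rw [dist_eq_norm, this, norm_smul, Real.norm_eq_abs, abs_of_nonneg ht0]
    have hxx : ‖x - xs‖ ≤ 2 * R := by
      calc ‖x - xs‖ ≤ ‖x‖ + ‖xs‖ := norm_sub_le _ _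
        _ ≤ 2 * R := by linarith [hR x hx, hR xs hxs]
    calc t * ‖x - xs‖ ≤ t * (2 * R) := mul_le_mul_of_nonneg_left hxx ht0
      _ = 4 * R * η / δ0 := by rw [htdef]; ring

lemma hausdorff_bound (hconv : Convex ℝ A) {n n0 : E2} (hn : ‖n‖ = 1) (hn0 : ‖n0‖ = 1)
    {c c0 R δ0 η : ℝ} (hR : ∀ x ∈ A, ‖x‖ ≤ R) (hRpos : 0 < R)
    {xs : E2} (hxs : xs ∈ A) (hxsv : ⟪xs, n0⟫ = c0 - δ0) (hδ0 : 0 < δ0)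
    (hη : |c - c0| + R * ‖n - n0‖ ≤ η) (hηδ : η ≤ δ0 / 4) :
    hausdorffDist (A ∩ {x : E2 | ⟪x, n⟫ ≤ c}) (A ∩ {x : E2 | ⟪x, n0⟫ ≤ c0})
      ≤ 4 * R * η / δ0 := by
  have hηpos : 0 ≤ η := le_trans (by positivity) hη
  have h1 : c - c0 ≤ |c - c0| := le_abs_self _
  have h2 : c0 - c ≤ |c - c0| := neg_le_abs _ |>.trans_eq' (by rw [neg_sub])
  have hnn : 0 ≤ R * ‖n - n0‖ := by positivity
  apply hausdorffDist_le_of_mem_dist (by positivity)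
  · -- from left set (n, c) into right set (n0, c0)
    rintro x ⟨hxA, hxv⟩
    have hclose := abs_le.1 (inner_close (n := n) (n0 := n0) (hR x hxA))
    have hxv0 : ⟪x, n0⟫ ≤ c0 + η := by
      have h3 : ⟪x, n⟫ ≤ c := hxv
      linarith [hclose.1]
    have hxsv' : ⟪xs, n0⟫ ≤ c0 - δ0 / 2 := by rw [hxsv]; linarith
    exact pull_in hconv hn0 hxs hxsv' hδ0 hηpos hηδ hR hxA hxv0
  · -- from right set (n0, c0) into left set (n, c)
    rintro x ⟨hxA, hxv⟩
    have hclose := abs_le.1 (inner_close (n := n) (n0 := n0) (hR x hxA))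
    have hxv0 : ⟪x, n⟫ ≤ c + η := by
      have h3 : ⟪x, n0⟫ ≤ c0 := hxv
      linarith [hclose.2]
    have hxsclose := abs_le.1 (inner_close (n := n) (n0 := n0) (hR xs hxs))
    have hxsv' : ⟪xs, n⟫ ≤ c - δ0 / 2 := by
      have h4 : ⟪xs, n⟫ ≤ ⟪xs, n0⟫ + R * ‖n - n0‖ := by linarith [hxsclose.2]
      rw [hxsv] at h4
      linarith
    obtain ⟨y, hy, hdy⟩ := pull_in hconv hn hxs hxsv' hδ0 hηpos hηδ hR hxA hxv0
    exact ⟨y, hy, hdy⟩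

def nvec (θ : ℝ) : E2 :=
  Real.cos θ • EuclideanSpace.single 0 1 + Real.sin θ • EuclideanSpace.single 1 1

lemma inner_nvec_self (θ : ℝ) : ⟪nvec θ, nvec θ⟫ = 1 := by
  rw [nvec]
  simp only [inner_add_left, inner_add_right, real_inner_smul_left, real_inner_smul_right,
    EuclideanSpace.inner_single_left, EuclideanSpace.inner_single_right,
    EuclideanSpace.single_apply]
  norm_num
  nlinarith [Real.sin_sq_add_cos_sq θ]

lemma norm_nvec (θ : ℝ) : ‖nvec θ‖ = 1 := by
  have h := inner_nvec_self θ
  rw [real_inner_self_eq_norm_sq] at h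
  nlinarith [norm_nonneg (nvec θ)]

lemma nvec_ne_zero (θ : ℝ) : nvec θ ≠ 0 := fun h => by
  have := norm_nvec θ; rw [h] at this; simp at this

lemma cont_nvec : Continuous nvec :=
  (Real.continuous_cos.smul continuous_const).add (Real.continuous_sin.smul continuous_const)

lemma nvec_add_pi (θ : ℝ) : nvec (θ + Real.pi) = -nvec θ := by
  rw [nvec, nvec, Real.cos_add_pi, Real.sin_add_pi]
  module


lemma mk'_congr {S T : Set E2} (hST : S = T) (h1 : IsConvexBody S) (h2 : IsConvexBody T) :
    ConvexBodySpace.mk' S h1 = ConvexBodySpace.mk' T h2 := by subst hST; rfl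

end S11

/-- For any convex body `K ⊂ ℝ²` and any Hausdorff-continuous function `f` on convex
bodies, some line cuts `K` into two convex bodies of equal area and equal value of `f`. -/
theorem statement11 (K : ConvexBodySpace 2)
    (f : ConvexBodySpace 2 → ℝ) (hf : Continuous f) :
    ∃ (n : EuclideanSpace ℝ (Fin 2)) (c : ℝ), ‖n‖ = 1 ∧
      ∃ (h₁ : IsConvexBody (K.toSet ∩ {x | ⟪x, n⟫ ≤ c}))
        (h₂ : IsConvexBody (K.toSet ∩ {x | c ≤ ⟪x, n⟫})),
        volume (K.toSet ∩ {x | ⟪x, n⟫ ≤ c}) =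
          volume (K.toSet ∩ {x | c ≤ ⟪x, n⟫}) ∧
        f (ConvexBodySpace.mk' _ h₁) = f (ConvexBodySpace.mk' _ h₂) := by
  classical
  set A : Set S11.E2 := K.toSet with hAdef
  have hA : IsCompact A := K.1.isCompact
  have hconv : Convex ℝ A := K.2.1
  have hint : (interior A).Nonempty := K.2.2
  open S11 in
  -- bound on A
  obtain ⟨R0, hR0⟩ := hA.isBounded.subset_closedBall 0
  set R : ℝ := max R0 1 with hRdef
  have hRpos : (0:ℝ) < R := lt_of_lt_of_le one_pos (le_max_right _ _)
  have hR : ∀ x ∈ A, ‖x‖ ≤ R := fun x hx => le_trans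
    (by simpa using hR0 hx) (le_max_left _ _)
  -- the lower bodies along the circle of directions
  have hbody : ∀ θ : ℝ, IsConvexBody (A ∩ {x | ⟪x, S11.nvec θ⟫ ≤ S11.cv A (S11.nvec θ)}) :=
    fun θ => S11.body_isConvexBody hA hconv hint (S11.norm_nvec θ)
  set NC : ℝ → TopologicalSpace.NonemptyCompacts S11.E2 := fun θ =>
    ⟨⟨A ∩ {x | ⟪x, S11.nvec θ⟫ ≤ S11.cv A (S11.nvec θ)}, (hbody θ).1⟩,
      (hbody θ).2.2.mono interior_subset⟩ with hNCdef
  have hNCcont : Continuous NC := by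
    rw [Metric.continuous_iff]
    intro θ0 ε hε
    set n0 : S11.E2 := S11.nvec θ0 with hn0def
    have hn0 : ‖n0‖ = 1 := S11.norm_nvec θ0
    set c0 : ℝ := S11.cv A n0 with hc0def
    obtain ⟨xs, hxsint, hxsv⟩ := S11.exists_interior_below hA hconv hint hn0
    have hxs : xs ∈ A := interior_subset hxsint
    set δ0 : ℝ := c0 - ⟪xs, n0⟫ with hδ0def
    have hδ0 : 0 < δ0 := by rw [hδ0def]; linarith
    have hxsveq : ⟪xs, n0⟫ = c0 - δ0 := by rw [hδ0def]; ring
    set η : ℝ := min (δ0 / 4) (δ0 * ε / (8 * R)) with hηdef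
    have hηpos : 0 < η := lt_min (by linarith) (by positivity)
    obtain ⟨δ1, hδ1pos, hδ1⟩ := S11.cv_cont hA hconv hint hn0 (η / 2) (by linarith)
    obtain ⟨δ2, hδ2pos, hδ2⟩ := Metric.continuous_iff.1 S11.cont_nvec θ0
      (min δ1 (η / (2 * R))) (lt_min hδ1pos (by positivity))
    refine ⟨δ2, hδ2pos, fun θ hθ => ?_⟩
    have hnn := hδ2 θ hθ
    rw [dist_eq_norm] at hnn
    have hn1 : ‖S11.nvec θ - n0‖ < δ1 := lt_of_lt_of_le hnn (min_le_left _ _)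
    have hn2 : ‖S11.nvec θ - n0‖ < η / (2 * R) := lt_of_lt_of_le hnn (min_le_right _ _)
    have hcv := hδ1 (S11.nvec θ) (S11.norm_nvec θ) hn1
    have hRn : R * ‖S11.nvec θ - n0‖ ≤ η / 2 := by
      have := mul_le_mul_of_nonneg_left hn2.le hRpos.le
      calc R * ‖S11.nvec θ - n0‖ ≤ R * (η / (2 * R)) := this
        _ = η / 2 := by field_simp
    have hηbound : |S11.cv A (S11.nvec θ) - c0| + R * ‖S11.nvec θ - n0‖ ≤ η := by linarith
    have hHD := S11.hausdorff_bound hconv (S11.norm_nvec θ) hn0 hR hRpos hxs hxsveq hδ0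
      hηbound (min_le_left _ _)
    have hdist : dist (NC θ) (NC θ0) = hausdorffDist
        (A ∩ {x : S11.E2 | ⟪x, S11.nvec θ⟫ ≤ S11.cv A (S11.nvec θ)})
        (A ∩ {x : S11.E2 | ⟪x, n0⟫ ≤ c0}) := Metric.NonemptyCompacts.dist_eq
    rw [hdist]
    have hfinal : 4 * R * η / δ0 ≤ ε / 2 := by
      have hmin : η ≤ δ0 * ε / (8 * R) := min_le_right _ _
      rw [div_le_iff₀ hδ0]
      calc 4 * R * η ≤ 4 * R * (δ0 * ε / (8 * R)) :=
          mul_le_mul_of_nonneg_left hmin (by positivity)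
        _ = ε / 2 * δ0 := by field_simp; ring
    calc hausdorffDist _ _ ≤ 4 * R * η / δ0 := hHD
      _ ≤ ε / 2 := hfinal
      _ < ε := by linarith
  set FB : ℝ → ConvexBodySpace 2 := fun θ =>
    ⟨NC θ, (hbody θ).2.1, (hbody θ).2.2⟩ with hFBdef
  have hFBcont : Continuous FB := hNCcont.subtype_mk _
  have hFBmk : ∀ θ, FB θ = ConvexBodySpace.mk' _ (hbody θ) := fun θ => rfl
  set g : ℝ → ℝ := fun θ => f (FB θ) - f (FB (θ + Real.pi)) with hgdef
  have hgcont : Continuous g := (hf.comp hFBcont).sub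
    (hf.comp (hFBcont.comp (continuous_id.add continuous_const)))
  have hFB0 : FB (0 + Real.pi) = FB Real.pi := by norm_num
  have hnvec2pi : S11.nvec (Real.pi + Real.pi) = S11.nvec 0 := by
    rw [S11.nvec_add_pi]
    have h1 : S11.nvec Real.pi = - S11.nvec 0 := by
      rw [← zero_add Real.pi, S11.nvec_add_pi]
    rw [h1, neg_neg]
  have hFB2pi : FB (Real.pi + Real.pi) = FB 0 := by
    rw [hFBmk, hFBmk]
    exact S11.mk'_congr (by rw [hnvec2pi]) _ _
  have hgsum : g Real.pi = - g 0 := by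
    rw [hgdef]
    simp only
    rw [hFB0, hFB2pi]
    ring
  have hmem : (0:ℝ) ∈ uIcc (g 0) (g Real.pi) := by
    rcases le_total (g 0) 0 with h | h
    · exact mem_uIcc.2 (Or.inl ⟨h, by linarith [hgsum]⟩)
    · exact mem_uIcc.2 (Or.inr ⟨by linarith [hgsum], h⟩)
  obtain ⟨θs, hθsmem, hθs⟩ := intermediate_value_uIcc hgcont.continuousOn hmem
  set n : S11.E2 := S11.nvec θs with hndef
  have hn : ‖n‖ = 1 := S11.norm_nvec θs
  have hn0' : n ≠ 0 := fun h => by rw [h] at hn; simp at hn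
  set c : ℝ := S11.cv A n with hcdef
  have hsetplus : A ∩ {x : S11.E2 | c ≤ ⟪x, n⟫}
      = A ∩ {x | ⟪x, S11.nvec (θs + Real.pi)⟫ ≤ S11.cv A (S11.nvec (θs + Real.pi))} := by
    rw [S11.nvec_add_pi, S11.cv_neg hA hconv hint hn]
    ext x
    simp only [mem_inter_iff, mem_setOf_eq, inner_neg_right]
    constructor <;> rintro ⟨h1, h2⟩ <;> exact ⟨h1, by linarith⟩
  have h₂ : IsConvexBody (A ∩ {x : S11.E2 | c ≤ ⟪x, n⟫}) := by
    rw [hsetplus]; exact hbody (θs + Real.pi)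
  refine ⟨n, c, hn, hbody θs, h₂, ?_, ?_⟩
  · -- equal volumes
    have hc := S11.cv_spec hA hn
    rw [S11.Fr] at hc
    have hcompl := S11.vol_compl hA n hn0' c
    apply (ENNReal.toReal_eq_toReal_iff' (S11.vol_inter_ne_top hA _) (S11.vol_inter_ne_top hA _)).1
    rw [hc, hcompl, ENNReal.toReal_sub_of_le (measure_mono inter_subset_left) hA.measure_ne_top,
      hc, S11.half]
    ring
  · -- equal f values
    have h1 : ConvexBodySpace.mk' _ (hbody θs) = FB θs := (hFBmk θs).symm
    have h2 : ConvexBodySpace.mk' _ h₂ = FB (θs + Real.pi) := by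
      rw [hFBmk]
      exact S11.mk'_congr hsetplus _ _
    rw [h1, h2]
    have : g θs = 0 := hθs
    rw [hgdef] at this
    simp only at this
    linarith
end
end
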